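/- arXiv:2305.08331 — 3 statements merged into one kernel-verified Lean document; each statement's English description precedes it below -/
import Mathlib

section
/- For every integer n ≥ 16 there exists an n-vertex C4-free Halin graph H with e(H) = 5(n−1)/3 if n ≡ 1 (mod 3), with e(H) = 5(n−2)/3 + 1 if n ≡ 2 (mod 3), and with e(H) = 5(n−3)/3 + 3 if n ≡ 0 (mod 3). -/
open SimpleGraph

/-- Degree of a vertex as the `ncard` of its neighbour set. -/
noncomputable def ncDeg {V : Type*} (G : SimpleGraph V) (v : V) : ℕ :=
  (G.neighborSet v).ncard

/-- A leaf is a vertex of degree one. -/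
def IsLeaf {V : Type*} (G : SimpleGraph V) (v : V) : Prop :=
  ncDeg G v = 1

/-- A Halin graph, presented by its characteristic tree `T` and outer cycle `C`.
The underlying graph is `T ⊔ C`.  The outer cycle is a `2`-regular connected graph
whose support is exactly the set of leaves of `T`, every non-leaf of `T` has degree
at least three, and the cycle is compatible with a planar embedding: for every edge
`uv` of `T`, the leaves lying in each component of `T - uv` are consecutive on the
cycle, i.e. they induce a connected subgraph of the cycle. -/
structure HalinGraph (V : Type*) [Fintype V] : Type _ where
  /-- the characteristic tree -/
  T : SimpleGraph V
  /-- the outer cycle -/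
  C : SimpleGraph V
  tree_isTree : T.IsTree
  four_le_card : 4 ≤ Fintype.card V
  nonleaf_degree : ∀ v : V, ¬ IsLeaf T v → 3 ≤ ncDeg T v
  support_C : C.support = {v : V | IsLeaf T v}
  two_regular : ∀ v ∈ C.support, ncDeg C v = 2
  cycle_connected : (C.induce C.support).Connected
  planar : ∀ u v : V, T.Adj u v →
    (C.induce {x : V | IsLeaf T x ∧ (T.deleteEdges {s(u, v)}).Reachable u x}).Connected

/-- The Halin graph itself: the (edge-disjoint) union of the tree and the outer cycle. -/
def HalinGraph.graph {V : Type*} [Fintype V] (H : HalinGraph V) : SimpleGraph V :=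
  H.T ⊔ H.C

/-- Number of edges of a graph. -/
noncomputable def eCount {V : Type*} (G : SimpleGraph V) : ℕ :=
  G.edgeSet.ncard

/-- A graph is `C₄`-free iff it contains no cycle of length `4`. -/
def C4Free {V : Type*} (G : SimpleGraph V) : Prop :=
  ∀ (v : V) (w : G.Walk v v), w.IsCycle → w.length ≠ 4

/-- A semi-branching vertex of the characteristic tree: a non-leaf with at least one
leaf neighbour and at least two non-leaf neighbours. -/
def SemiBranching {V : Type*} (T : SimpleGraph V) (v : V) : Prop :=
  ¬ IsLeaf T v ∧ (∃ x, T.Adj v x ∧ IsLeaf T x) ∧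
    ∃ x y : V, x ≠ y ∧ T.Adj v x ∧ T.Adj v y ∧ ¬ IsLeaf T x ∧ ¬ IsLeaf T y

lemma three_le_ncard_of {α : Type*} {S : Set α} {x y z : α} (hx : x ∈ S) (hy : y ∈ S)
    (hz : z ∈ S) (hxy : x ≠ y) (hxz : x ≠ z) (hyz : y ≠ z) (hfin : S.Finite) :
    3 ≤ S.ncard := by
  have hsub : ({x, y, z} : Set α) ⊆ S := by
    intro w hw
    rcases hw with rfl | rfl | rfl
    · exact hx
    · exact hy
    · exact hz
  have h3 : ({x, y, z} : Set α).ncard = 3 := by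
    rw [Set.ncard_insert_of_notMem (by simp [hxy, hxz]) (Set.toFinite _),
      Set.ncard_pair hyz]
  rw [← h3]
  exact Set.ncard_le_ncard hsub hfin

namespace HalinAux
structure HP where
  n : ℕ
  t : ℕ
  j : ℕ
  a : ℕ
  b : ℕ
  ha : 2 ≤ a
  hshape : (t = 1 ∧ j = 2 ∧ b = 0) ∨ (t = 2 ∧ j = 2 ∧ b = 2) ∨ (t = 2 ∧ j = 3 ∧ b = 2)
  hn : n = 1 + t + (a + b) + (j + 2 * (a + b))
namespace HP
variable (P : HP)
def m : ℕ := 1 + P.t + (P.a + P.b)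
def L : ℕ := P.j + 2 * (P.a + P.b)
lemma n_eq : P.n = P.m + P.L := P.hn
lemma L5 : 5 ≤ P.L := by have := P.ha; rcases P.hshape with ⟨h1,h2,h3⟩|⟨h1,h2,h3⟩|⟨h1,h2,h3⟩ <;>
  simp only [L] <;> omega
lemma m4 : 4 ≤ P.m := by have := P.ha; rcases P.hshape with ⟨h1,h2,h3⟩|⟨h1,h2,h3⟩|⟨h1,h2,h3⟩ <;>
  simp only [m] <;> omega
lemma m_lt_n : P.m < P.n := by have := P.L5; have := P.n_eq; omega
lemma n_pos : 0 < P.n := by have := P.m4; have := P.m_lt_n; omega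
def par (v : ℕ) : ℕ :=
  if v ≤ P.t then 0
  else if v < P.m then (if v ≤ P.t + P.a then 1 else 2)
  else if v - P.m < 2 then 0
  else if v - P.m < 2 + 2 * P.a then P.t + 1 + (v - P.m - 2) / 2
  else if v - P.m < 2 * P.a + P.j then 0
  else P.t + P.a + 1 + (v - P.m - (2 * P.a + P.j)) / 2
lemma par_lt_m {v : ℕ} (hv : v < P.n) : P.par v < P.m := by
  have := P.ha; have hn := P.n_eq
  rcases P.hshape with ⟨h1,h2,h3⟩|⟨h1,h2,h3⟩|⟨h1,h2,h3⟩ <;>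
    (simp only [par]; split_ifs <;> simp only [m, L] at * <;> omega)
lemma par_lt_self {v : ℕ} (h : 1 ≤ v) (hv : v < P.n) : P.par v < v := by
  have h2 := P.par_lt_m hv
  have := P.ha; have hn := P.n_eq
  rcases P.hshape with ⟨h1,h2,h3⟩|⟨h1,h2,h3⟩|⟨h1,h2,h3⟩ <;>
    (simp only [par]; split_ifs <;> simp only [m, L] at * <;> omega)
lemma par_zero : P.par 0 = 0 := by simp [par]
def nxt (v : ℕ) : ℕ := if v + 1 < P.n then v + 1 else P.m
def T : SimpleGraph (Fin P.n) where
  Adj u v := (u : ℕ) ≠ (v : ℕ) ∧ (P.par u = v ∨ P.par v = u)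
  symm := by constructor; intro u v ⟨h1, h2⟩; exact ⟨h1.symm, h2.symm⟩
  loopless := by constructor; intro u ⟨h1, _⟩; exact h1 rfl
def C : SimpleGraph (Fin P.n) where
  Adj u v := (u : ℕ) ≠ (v : ℕ) ∧ P.m ≤ (u : ℕ) ∧ P.m ≤ (v : ℕ) ∧
    (P.nxt u = v ∨ P.nxt v = u)
  symm := by constructor; intro u v ⟨h1, h2, h3, h4⟩; exact ⟨h1.symm, h3, h2, h4.symm⟩
  loopless := by constructor; intro u ⟨h1, _⟩; exact h1 rfl
lemma T_adj {u v : Fin P.n} :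
    P.T.Adj u v ↔ (u : ℕ) ≠ (v : ℕ) ∧ (P.par u = v ∨ P.par v = u) := Iff.rfl
lemma C_adj {u v : Fin P.n} :
    P.C.Adj u v ↔ (u : ℕ) ≠ (v : ℕ) ∧ P.m ≤ (u : ℕ) ∧ P.m ≤ (v : ℕ) ∧
    (P.nxt u = v ∨ P.nxt v = u) := Iff.rfl

----------------- chunk 2 ------------------

/-- the parent, as an element of `Fin n` -/
def pfin (v : Fin P.n) : Fin P.n := ⟨P.par v, lt_trans (P.par_lt_m v.isLt) P.m_lt_n⟩

@[simp] lemma pfin_val (v : Fin P.n) : (P.pfin v : ℕ) = P.par v := rfl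

lemma T_adj_pfin {v : Fin P.n} (h : 1 ≤ (v : ℕ)) : P.T.Adj v (P.pfin v) := by
  refine ⟨?_, Or.inl rfl⟩
  have := P.par_lt_self h v.isLt
  simp only [pfin_val]; omega

/-- `x` is a descendant of `u` (or equal). -/
def desc (u x : ℕ) : Prop := ∃ i, P.par^[i] x = u

lemma desc_refl (u : ℕ) : P.desc u u := ⟨0, rfl⟩

lemma desc_step {u x : ℕ} (h : x ≠ u) : P.desc u x ↔ P.desc u (P.par x) := by
  constructor
  · rintro ⟨i, hi⟩
    cases i with
    | zero => exact absurd hi h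
    | succ i => exact ⟨i, by rwa [Function.iterate_succ_apply] at hi⟩
  · rintro ⟨i, hi⟩
    exact ⟨i + 1, by rwa [Function.iterate_succ_apply]⟩

lemma desc_of_par {u x : ℕ} (h : P.par x = u) : P.desc u x :=
  ⟨1, by simpa using h⟩

lemma desc_le {u x : ℕ} (hx : x < P.n) (h : P.desc u x) : u ≤ x := by
  obtain ⟨i, hi⟩ := h
  induction i generalizing x with
  | zero => simp only [Function.iterate_zero_apply] at hi; omega
  | succ i ih =>
    rw [Function.iterate_succ_apply] at hi
    rcases Nat.eq_zero_or_pos x with rfl | hpos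
    · rw [P.par_zero] at hi; exact ih P.n_pos hi
    · have h1 := P.par_lt_self hpos hx
      have := ih (lt_trans h1 hx) hi
      omega

lemma not_desc_of_lt {u x : ℕ} (hx : x < P.n) (h : x < u) : ¬ P.desc u x :=
  fun hd => absurd (P.desc_le hx hd) (by omega)

lemma not_desc_par_self {u : ℕ} (hu : 1 ≤ u) (hun : u < P.n) : ¬ P.desc u (P.par u) :=
  P.not_desc_of_lt (lt_trans (P.par_lt_self hu hun) hun) (P.par_lt_self hu hun)

/-- Reachability in `T` minus the edge `(u, par u)` preserves descendant-ness. -/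
lemma reach_desc_invar {u : Fin P.n} (hu : 1 ≤ (u : ℕ)) {x y : Fin P.n}
    (h : (P.T.deleteEdges {s(u, P.pfin u)}).Reachable x y) :
    (P.desc u x ↔ P.desc u y) := by
  rw [reachable_iff_reflTransGen] at h
  induction h with
  | refl => rfl
  | tail _ hadj ih =>
    rename_i b c _
    refine ih.trans ?_
    rw [deleteEdges_adj] at hadj
    obtain ⟨⟨hne, hpar⟩, hnot⟩ := hadj
    have key : ∀ p q : Fin P.n, P.par p = q → s(p, q) ∉ ({s(u, P.pfin u)} : Set (Sym2 (Fin P.n))) →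
        (p : ℕ) ≠ (q : ℕ) → (P.desc u p ↔ P.desc u q) := by
      intro p q hpq hne2 hne3
      have hpu : (p : ℕ) ≠ (u : ℕ) := by
        intro he
        apply hne2
        simp only [Set.mem_singleton_iff]
        have : p = u := Fin.ext he
        subst this
        have : q = P.pfin p := Fin.ext (by simp [hpq])
        rw [this]
      rw [P.desc_step hpu, hpq]
    rcases hpar with hp | hp
    · exact key b c hp hnot hne
    · refine (key c b hp ?_ (Ne.symm hne)).symm
      rw [show s(c, b) = s(b, c) from Sym2.eq_swap]
      exact hnot

/-- From a descendant, one can reach `u` in `T` minus the edge `(u, par u)`. -/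
lemma desc_reach {u : Fin P.n} (hu : 1 ≤ (u : ℕ)) :
    ∀ x : Fin P.n, P.desc u x → (P.T.deleteEdges {s(u, P.pfin u)}).Reachable u x := by
  have main : ∀ k (x : Fin P.n), (x : ℕ) ≤ k → P.desc u x →
      (P.T.deleteEdges {s(u, P.pfin u)}).Reachable u x := by
    intro k
    induction k with
    | zero =>
      intro x hx hd
      have h1 := P.desc_le x.isLt hd
      have h2 : x = u := Fin.ext (by omega)
      rw [h2]
    | succ k ih =>
      intro x hx hd
      by_cases hxu : (x : ℕ) = (u : ℕ)
      · rw [show x = u from Fin.ext hxu]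
      · have hul := P.desc_le x.isLt hd
        have hx1 : 1 ≤ (x : ℕ) := by omega
        have hdp : P.desc u (P.par x) := (P.desc_step hxu).mp hd
        have hplt := P.par_lt_self hx1 x.isLt
        have hreach : (P.T.deleteEdges {s(u, P.pfin u)}).Reachable u (P.pfin x) :=
          ih (P.pfin x) (by simp only [pfin_val]; omega) hdp
        refine hreach.trans (Adj.reachable ?_).symm
        rw [deleteEdges_adj]
        constructor
        · exact ⟨by simp only [pfin_val]; omega, Or.inl rfl⟩
        · intro hmem
          simp only [Set.mem_singleton_iff, Sym2.eq_iff] at hmem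
          rcases hmem with ⟨h1, _⟩ | ⟨h1, _⟩
          · exact hxu (congrArg Fin.val h1)
          · have h3 : (x : ℕ) = P.par u := by
              have := congrArg Fin.val h1; simpa using this
            have := P.par_lt_self hu u.isLt
            omega
  exact fun x => main x x le_rfl

/-- From a non-descendant, one can reach the root in `T` minus the edge `(u, par u)`. -/
lemma notdesc_reach_root {u : Fin P.n} (hu : 1 ≤ (u : ℕ)) :
    ∀ x : Fin P.n, ¬ P.desc u x →
      (P.T.deleteEdges {s(u, P.pfin u)}).Reachable x ⟨0, P.n_pos⟩ := by
  have main : ∀ k (x : Fin P.n), (x : ℕ) ≤ k → ¬ P.desc u x →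
      (P.T.deleteEdges {s(u, P.pfin u)}).Reachable x ⟨0, P.n_pos⟩ := by
    intro k
    induction k with
    | zero =>
      intro x hx _
      rw [show x = ⟨0, P.n_pos⟩ from Fin.ext (by simp; omega)]
    | succ k ih =>
      intro x hx hd
      rcases Nat.eq_zero_or_pos (x : ℕ) with h0 | hx1
      · rw [show x = ⟨0, P.n_pos⟩ from Fin.ext (by simp [h0])]
      · have hxu : (x : ℕ) ≠ (u : ℕ) := fun he => hd (he ▸ P.desc_refl _ : P.desc u x)
        have hplt := P.par_lt_self hx1 x.isLt
        have hdp : ¬ P.desc u (P.par x) := fun hdp => hd ((P.desc_step hxu).mpr hdp)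
        have hreach := ih (P.pfin x) (by simp only [pfin_val]; omega) hdp
        refine (Adj.reachable ?_).trans hreach
        rw [deleteEdges_adj]
        constructor
        · exact ⟨by simp only [pfin_val]; omega, Or.inl rfl⟩
        · intro hmem
          simp only [Set.mem_singleton_iff, Sym2.eq_iff] at hmem
          rcases hmem with ⟨h1, _⟩ | ⟨_, h2⟩
          · exact hxu (congrArg Fin.val h1)
          · have : P.par x = (u : ℕ) := by
              have := congrArg Fin.val h2; simpa using this
            exact hd (P.desc_of_par this)
  exact fun x => main x x le_rfl

lemma reach_iff_desc {u : Fin P.n} (hu : 1 ≤ (u : ℕ)) (x : Fin P.n) :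
    (P.T.deleteEdges {s(u, P.pfin u)}).Reachable u x ↔ P.desc u x :=
  ⟨fun h => (P.reach_desc_invar hu h).mp (P.desc_refl _), fun h => P.desc_reach hu x h⟩

lemma parent_reach_iff {u : Fin P.n} (hu : 1 ≤ (u : ℕ)) (x : Fin P.n) :
    (P.T.deleteEdges {s(u, P.pfin u)}).Reachable (P.pfin u) x ↔ ¬ P.desc u x := by
  constructor
  · intro h hd
    have := (P.reach_desc_invar hu h).mpr hd
    exact P.not_desc_par_self hu u.isLt (by simpa using this)
  · intro h
    have h1 := P.notdesc_reach_root hu (P.pfin u)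
      (by simpa using P.not_desc_par_self hu u.isLt)
    have h2 := P.notdesc_reach_root hu x h
    exact h1.trans h2.symm

/-- connectivity of T -/
lemma T_preconn : P.T.Preconnected := by
  have key : ∀ k (v : Fin P.n), (v : ℕ) ≤ k → P.T.Reachable v ⟨0, P.n_pos⟩ := by
    intro k
    induction k with
    | zero =>
      intro v hv
      rw [show v = ⟨0, P.n_pos⟩ from Fin.ext (by simp; omega)]
    | succ k ih =>
      intro v hv
      rcases Nat.eq_zero_or_pos (v : ℕ) with h0 | h1
      · exact (Fin.ext h0 : v = ⟨0, P.n_pos⟩) ▸ Reachable.refl _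
      · have hplt := P.par_lt_self h1 v.isLt
        exact (Adj.reachable (P.T_adj_pfin h1)).trans
          (ih (P.pfin v) (by simp only [pfin_val]; omega))
  intro u v
  exact (key u u le_rfl).trans (key v v le_rfl).symm

lemma T_connected : P.T.Connected := by
  rw [connected_iff]
  exact ⟨P.T_preconn, ⟨⟨0, P.n_pos⟩⟩⟩

lemma T_isTree : P.T.IsTree := by
  refine ⟨P.T_connected, ?_⟩
  rw [isAcyclic_iff_forall_adj_isBridge]
  intro v w hadj
  rw [isBridge_iff]
  rcases hadj.2 with hp | hp
  · -- v is the child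
    have hv1 : 1 ≤ (v : ℕ) := by
      rcases Nat.eq_zero_or_pos (v : ℕ) with h0 | h1
      · exfalso; rw [h0, P.par_zero] at hp; exact hadj.1 (by omega)
      · exact h1
    have hw : w = P.pfin v := Fin.ext (by simp [hp])
    rw [hw]
    intro hreach
    have : P.desc v (P.pfin v) := (P.reach_desc_invar hv1 hreach).mp (P.desc_refl _)
    exact P.not_desc_par_self hv1 v.isLt (by simpa using this)
  · -- w is the child
    have hw1 : 1 ≤ (w : ℕ) := by
      rcases Nat.eq_zero_or_pos (w : ℕ) with h0 | h1
      · exfalso; rw [h0, P.par_zero] at hp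
        exact hadj.1 (by omega)
      · exact h1
    have hv : v = P.pfin w := Fin.ext (by simp [hp])
    rw [hv, Sym2.eq_swap]
    intro hreach
    have : P.desc w (P.pfin w) := (P.reach_desc_invar hw1 hreach.symm).mp (P.desc_refl _)
    exact P.not_desc_par_self hw1 w.isLt (by simpa using this)

----------------- chunk 3 ------------------

lemma hshape' : (P.t = 1 ∧ P.j = 2 ∧ P.b = 0) ∨ (P.t = 2 ∧ P.j = 2 ∧ P.b = 2) ∨
    (P.t = 2 ∧ P.j = 3 ∧ P.b = 2) := P.hshape

lemma m_def : P.m = 1 + P.t + (P.a + P.b) := rfl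
lemma L_def : P.L = P.j + 2 * (P.a + P.b) := rfl

lemma shape_facts : 1 ≤ P.t ∧ P.t ≤ 2 ∧ 2 ≤ P.j ∧ P.j ≤ P.t + 1 ∧ P.b = 2 * P.t - 2 := by
  rcases P.hshape' with ⟨h1,h2,h3⟩|⟨h1,h2,h3⟩|⟨h1,h2,h3⟩ <;> omega

lemma par_y {v : ℕ} (h1 : 1 ≤ v) (h : v ≤ P.t) : P.par v = 0 := by
  have hf := P.shape_facts
  simp only [par]; split_ifs <;> omega

lemma par_pend1 {v : ℕ} (h1 : P.t + 1 ≤ v) (h2 : v ≤ P.t + P.a) : P.par v = 1 := by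
  have hm := P.m_def; have hf := P.shape_facts
  simp only [par]; split_ifs <;> omega

lemma par_pend2 {v : ℕ} (h1 : P.t + P.a + 1 ≤ v) (h2 : v < P.m) : P.par v = 2 := by
  have hm := P.m_def; have hf := P.shape_facts
  simp only [par]; split_ifs <;> omega

lemma par_leaf_z1 {q : ℕ} (h : q < 2) : P.par (P.m + q) = 0 := by
  have hm := P.m_def; have hf := P.shape_facts
  simp only [par, Nat.add_sub_cancel_left]; split_ifs <;> omega

lemma par_leaf_y1 {q : ℕ} (h1 : 2 ≤ q) (h2 : q < 2 + 2 * P.a) :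
    P.par (P.m + q) = P.t + 1 + (q - 2) / 2 := by
  have hm := P.m_def; have hf := P.shape_facts
  simp only [par, Nat.add_sub_cancel_left]; split_ifs <;> omega

lemma par_leaf_z2 {q : ℕ} (h1 : 2 + 2 * P.a ≤ q) (h2 : q < 2 * P.a + P.j) :
    P.par (P.m + q) = 0 := by
  have hm := P.m_def; have hf := P.shape_facts
  simp only [par, Nat.add_sub_cancel_left]; split_ifs <;> omega

lemma par_leaf_y2 {q : ℕ} (h1 : 2 * P.a + P.j ≤ q) (h2 : q < P.L) :
    P.par (P.m + q) = P.t + P.a + 1 + (q - (2 * P.a + P.j)) / 2 := by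
  have hm := P.m_def; have hL := P.L_def; have hf := P.shape_facts
  simp only [par, Nat.add_sub_cancel_left]; split_ifs <;> omega

lemma finne {x y : Fin P.n} (h : (x : ℕ) ≠ (y : ℕ)) : x ≠ y :=
  fun he => h (congrArg Fin.val he)

lemma leaf_nbhd {v : Fin P.n} (h : P.m ≤ (v : ℕ)) :
    P.T.neighborSet v = {P.pfin v} := by
  ext u
  simp only [mem_neighborSet, Set.mem_singleton_iff, T_adj]
  constructor
  · rintro ⟨hne, hor | hor⟩
    · exact (Fin.ext (by simp [hor.symm]) : u = P.pfin v).symm ▸ rfl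
    · exfalso
      have := P.par_lt_m u.isLt
      omega
  · rintro rfl
    have := P.par_lt_m v.isLt
    exact ⟨by simp only [pfin_val]; omega, Or.inl rfl⟩

lemma ncDeg_T_leaf {v : Fin P.n} (h : P.m ≤ (v : ℕ)) : ncDeg P.T v = 1 := by
  rw [ncDeg, P.leaf_nbhd h, Set.ncard_singleton]

lemma exists3 {v : Fin P.n} (h : (v : ℕ) < P.m) :
    ∃ x y z : Fin P.n, x ≠ y ∧ x ≠ z ∧ y ≠ z ∧ P.T.Adj v x ∧ P.T.Adj v y ∧ P.T.Adj v z := by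
  have hm := P.m_def; have hL := P.L_def; have hn := P.n_eq; have ha := P.ha
  have hs := P.hshape'
  obtain h0 | h1 | h2 | hp1 | hp2 :
      (v : ℕ) = 0 ∨ (v : ℕ) = 1 ∨ ((v : ℕ) = 2 ∧ P.t = 2) ∨
      (P.t + 1 ≤ (v : ℕ) ∧ (v : ℕ) ≤ P.t + P.a) ∨
      (P.t + P.a + 1 ≤ (v : ℕ) ∧ (v : ℕ) < P.m) := by
    rcases hs with ⟨h1,h2,h3⟩|⟨h1,h2,h3⟩|⟨h1,h2,h3⟩ <;> omega
  · -- root: neighbours 1, m, m+1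
    have ht1 : 1 ≤ P.t := by rcases hs with ⟨h1,_⟩|⟨h1,_⟩|⟨h1,_⟩ <;> omega
    have e1 : P.par 1 = 0 := P.par_y le_rfl ht1
    have e2 : P.par (P.m + 0) = 0 := P.par_leaf_z1 (by omega)
    have e3 : P.par (P.m + 1) = 0 := P.par_leaf_z1 (by omega)
    refine ⟨⟨1, by omega⟩, ⟨P.m + 0, by omega⟩, ⟨P.m + 1, by omega⟩,
      P.finne (by simp only [Fin.val_mk]; omega), P.finne (by simp only [Fin.val_mk]; omega),
      P.finne (by simp only [Fin.val_mk]; omega), ?_, ?_, ?_⟩ <;>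
      exact ⟨by simp only [Fin.val_mk]; omega, Or.inr (by simp only [Fin.val_mk]; omega)⟩
  · -- y1: neighbours 0, t+1, t+2
    have e0 : P.par (v : ℕ) = 0 := by rw [h1]; exact P.par_y le_rfl (by rcases hs with ⟨h1,_⟩|⟨h1,_⟩|⟨h1,_⟩ <;> omega)
    have e1 : P.par (P.t + 1) = 1 := P.par_pend1 le_rfl (by omega)
    have e2 : P.par (P.t + 2) = 1 := P.par_pend1 (by omega) (by omega)
    refine ⟨⟨0, by omega⟩, ⟨P.t + 1, by omega⟩, ⟨P.t + 2, by omega⟩,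
      P.finne (by simp only [Fin.val_mk]; omega), P.finne (by simp only [Fin.val_mk]; omega),
      P.finne (by simp only [Fin.val_mk]; omega), ?_, ?_, ?_⟩
    · exact ⟨by simp only [Fin.val_mk]; omega, Or.inl (by simp only [Fin.val_mk]; omega)⟩
    · exact ⟨by simp only [Fin.val_mk]; omega, Or.inr (by simp only [Fin.val_mk]; omega)⟩
    · exact ⟨by simp only [Fin.val_mk]; omega, Or.inr (by simp only [Fin.val_mk]; omega)⟩
  · -- y2: neighbours 0, t+a+1, t+a+2
    obtain ⟨hv2, ht2⟩ := h2
    have hb : P.b = 2 := by rcases hs with ⟨h1,_,h3⟩|⟨_,_,h3⟩|⟨_,_,h3⟩ <;> omega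
    have e0 : P.par (v : ℕ) = 0 := by rw [hv2]; exact P.par_y (by omega) (by omega)
    have e1 : P.par (P.t + P.a + 1) = 2 := P.par_pend2 le_rfl (by omega)
    have e2 : P.par (P.t + P.a + 2) = 2 := P.par_pend2 (by omega) (by omega)
    refine ⟨⟨0, by omega⟩, ⟨P.t + P.a + 1, by omega⟩, ⟨P.t + P.a + 2, by omega⟩,
      P.finne (by simp only [Fin.val_mk]; omega), P.finne (by simp only [Fin.val_mk]; omega),
      P.finne (by simp only [Fin.val_mk]; omega), ?_, ?_, ?_⟩
    · exact ⟨by simp only [Fin.val_mk]; omega, Or.inl (by simp only [Fin.val_mk]; omega)⟩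
    · exact ⟨by simp only [Fin.val_mk]; omega, Or.inr (by simp only [Fin.val_mk]; omega)⟩
    · exact ⟨by simp only [Fin.val_mk]; omega, Or.inr (by simp only [Fin.val_mk]; omega)⟩
  · -- pendant of y1
    set i := (v : ℕ) - P.t - 1 with hi
    have hia : i < P.a := by omega
    have e0 : P.par (v : ℕ) = 1 := P.par_pend1 (by omega) (by omega)
    have e1 : P.par (P.m + (2 + 2 * i)) = P.t + 1 + i := by
      rw [P.par_leaf_y1 (by omega) (by omega)]; omega
    have e2 : P.par (P.m + (3 + 2 * i)) = P.t + 1 + i := by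
      rw [P.par_leaf_y1 (by omega) (by omega)]; omega
    refine ⟨⟨1, by omega⟩, ⟨P.m + (2 + 2 * i), by omega⟩, ⟨P.m + (3 + 2 * i), by omega⟩,
      P.finne (by simp only [Fin.val_mk]; omega), P.finne (by simp only [Fin.val_mk]; omega),
      P.finne (by simp only [Fin.val_mk]; omega), ?_, ?_, ?_⟩
    · exact ⟨by simp only [Fin.val_mk]; omega, Or.inl (by simp only [Fin.val_mk]; omega)⟩
    · exact ⟨by simp only [Fin.val_mk]; omega, Or.inr (by simp only [Fin.val_mk]; omega)⟩
    · exact ⟨by simp only [Fin.val_mk]; omega, Or.inr (by simp only [Fin.val_mk]; omega)⟩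
  · -- pendant of y2
    have hb : P.b = 2 ∧ P.t = 2 := by rcases hs with ⟨h1,_,h3⟩|⟨h1,_,h3⟩|⟨h1,_,h3⟩ <;> omega
    set i := (v : ℕ) - P.t - P.a - 1 with hi
    have hib : i < P.b := by omega
    have e0 : P.par (v : ℕ) = 2 := P.par_pend2 (by omega) (by omega)
    have e1 : P.par (P.m + (2 * P.a + P.j + 2 * i)) = P.t + P.a + 1 + i := by
      rw [P.par_leaf_y2 (by omega) (by omega)]; omega
    have e2 : P.par (P.m + (2 * P.a + P.j + 2 * i + 1)) = P.t + P.a + 1 + i := by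
      rw [P.par_leaf_y2 (by omega) (by omega)]; omega
    refine ⟨⟨2, by omega⟩, ⟨P.m + (2 * P.a + P.j + 2 * i), by omega⟩,
      ⟨P.m + (2 * P.a + P.j + 2 * i + 1), by omega⟩,
      P.finne (by simp only [Fin.val_mk]; omega), P.finne (by simp only [Fin.val_mk]; omega),
      P.finne (by simp only [Fin.val_mk]; omega), ?_, ?_, ?_⟩
    · exact ⟨by simp only [Fin.val_mk]; omega, Or.inl (by simp only [Fin.val_mk]; omega)⟩
    · exact ⟨by simp only [Fin.val_mk]; omega, Or.inr (by simp only [Fin.val_mk]; omega)⟩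
    · exact ⟨by simp only [Fin.val_mk]; omega, Or.inr (by simp only [Fin.val_mk]; omega)⟩

lemma ncDeg_T_internal {v : Fin P.n} (h : (v : ℕ) < P.m) : 3 ≤ ncDeg P.T v := by
  obtain ⟨x, y, z, hxy, hxz, hyz, hx, hy, hz⟩ := P.exists3 h
  exact three_le_ncard_of hx hy hz hxy hxz hyz (Set.toFinite _)

lemma isLeaf_iff {v : Fin P.n} : IsLeaf P.T v ↔ P.m ≤ (v : ℕ) := by
  constructor
  · intro hl
    by_contra hc
    have := P.ncDeg_T_internal (v := v) (by omega)
    rw [IsLeaf] at hl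
    omega
  · exact fun h => P.ncDeg_T_leaf h

def prv (v : ℕ) : ℕ := if P.m < v then v - 1 else P.n - 1

lemma nxt_lt {v : ℕ} : P.nxt v < P.n := by
  have := P.n_eq; have := P.L5; simp only [nxt]; split_ifs <;> omega

lemma prv_lt {v : ℕ} (hv : v < P.n) : P.prv v < P.n := by
  have := P.n_eq; have := P.L5; simp only [prv]; split_ifs <;> omega

lemma C_nbhd {v : Fin P.n} (h : P.m ≤ (v : ℕ)) :
    P.C.neighborSet v = {(⟨P.nxt v, P.nxt_lt⟩ : Fin P.n), ⟨P.prv v, P.prv_lt v.isLt⟩} := by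
  have hn := P.n_eq; have hL := P.L5; have hv := v.isLt
  ext u
  have hu := u.isLt
  simp only [mem_neighborSet, C_adj, Set.mem_insert_iff, Set.mem_singleton_iff, Fin.ext_iff,
    Fin.val_mk]
  constructor
  · rintro ⟨hne, _, hum, hor | hor⟩
    · exact Or.inl hor.symm
    · right
      simp only [nxt] at hor
      simp only [prv]
      split_ifs at hor ⊢ <;> omega
  · rintro (hor | hor)
    · have h1 : P.nxt (v : ℕ) = (u : ℕ) := hor.symm
      simp only [nxt] at h1
      refine ⟨?_, by omega, ?_, Or.inl ?_⟩
      · split_ifs at h1 <;> omega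
      · split_ifs at h1 <;> omega
      · simp only [nxt]; split_ifs at h1 ⊢ <;> omega
    · simp only [prv] at hor
      refine ⟨?_, by omega, ?_, Or.inr ?_⟩
      · split_ifs at hor <;> omega
      · split_ifs at hor <;> omega
      · simp only [nxt]; split_ifs at hor ⊢ <;> omega

lemma ncDeg_C_leaf {v : Fin P.n} (h : P.m ≤ (v : ℕ)) : ncDeg P.C v = 2 := by
  rw [ncDeg, P.C_nbhd h]
  have hn := P.n_eq; have hL := P.L5; have hv := v.isLt
  rw [Set.ncard_pair]
  intro he
  rw [Fin.ext_iff] at he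
  simp only [Fin.val_mk, nxt, prv] at he
  split_ifs at he <;> omega

lemma support_C_eq : P.C.support = {v : Fin P.n | P.m ≤ (v : ℕ)} := by
  have hn := P.n_eq; have hL := P.L5
  ext v
  simp only [mem_support, Set.mem_setOf_eq]
  constructor
  · rintro ⟨w, hadj⟩
    exact hadj.2.1
  · intro h
    have hv := v.isLt
    refine ⟨⟨P.nxt v, P.nxt_lt⟩, ?_, h, ?_, Or.inl ?_⟩ <;>
      simp only [Fin.val_mk, nxt] <;> split_ifs <;> omega

----------------- chunk 4 : arcs ------------------

def posw (x : ℕ) : ℕ := if x < P.L then x else x - P.L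

def arc (s len : ℕ) : Set (Fin P.n) := {x | ∃ i, i < len ∧ (x : ℕ) = P.m + P.posw (s + i)}

lemma arc_mem {s len : ℕ} (hs : s < P.L) (hlen : len ≤ P.L) (x : Fin P.n) :
    x ∈ P.arc s len ↔ (P.m ≤ (x : ℕ) ∧
      ((s ≤ (x : ℕ) - P.m ∧ (x : ℕ) - P.m < s + len) ∨ ((x : ℕ) - P.m + P.L < s + len))) := by
  have hn := P.n_eq; have hx := x.isLt
  constructor
  · rintro ⟨i, hi, hq⟩
    simp only [posw] at hq
    split_ifs at hq <;> omega
  · rintro ⟨hm, hor⟩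
    rcases hor with ⟨hlo, hhi⟩ | hwrap
    · exact ⟨(x : ℕ) - P.m - s, by omega, by simp only [posw]; split_ifs <;> omega⟩
    · exact ⟨(x : ℕ) - P.m + P.L - s, by omega, by simp only [posw]; split_ifs <;> omega⟩

lemma arc_connected {s len : ℕ} (hs : s < P.L) (hlen1 : 1 ≤ len) (hlen : len ≤ P.L) :
    (P.C.induce (P.arc s len)).Connected := by
  have hn := P.n_eq; have hL := P.L5
  have hvlt : ∀ i : ℕ, i < len → P.m + P.posw (s + i) < P.n := by
    intro i hi; simp only [posw]; split_ifs <;> omega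
  have hmem : ∀ i (hi : i < len), (⟨P.m + P.posw (s + i), hvlt i hi⟩ : Fin P.n) ∈ P.arc s len :=
    fun i hi => ⟨i, hi, rfl⟩
  have key : ∀ i (hi : i < len),
      (P.C.induce (P.arc s len)).Reachable ⟨_, hmem 0 hlen1⟩ ⟨_, hmem i hi⟩ := by
    intro i
    induction i with
    | zero => intro hi; exact Reachable.refl _
    | succ i ih =>
      intro hi
      have hadj : P.C.Adj ⟨P.m + P.posw (s + i), hvlt i (by omega)⟩
          ⟨P.m + P.posw (s + (i + 1)), hvlt (i + 1) hi⟩ := by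
        refine ⟨?_, ?_, ?_, Or.inl ?_⟩ <;>
          (simp only [Fin.val_mk, nxt, posw]; split_ifs <;> omega)
      exact (ih (by omega)).trans (Adj.reachable
        (show (P.C.induce (P.arc s len)).Adj ⟨_, hmem i (by omega)⟩ ⟨_, hmem (i+1) hi⟩
          from hadj))
  rw [connected_iff]
  refine ⟨?_, ⟨⟨_, hmem 0 hlen1⟩⟩⟩
  intro x y
  obtain ⟨i, hi, hxe⟩ := x.2
  obtain ⟨i', hi', hye⟩ := y.2
  have ex : x = ⟨_, hmem i hi⟩ := Subtype.ext (Fin.ext hxe)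
  have ey : y = ⟨_, hmem i' hi'⟩ := Subtype.ext (Fin.ext hye)
  rw [ex, ey]
  exact (key i hi).symm.trans (key i' hi')

----------------- chunk 5 : desc characterisations ------------------

lemma desc_one_leaf {x : ℕ} (hx1 : P.m ≤ x) (hx2 : x < P.n) :
    P.desc 1 x ↔ (2 ≤ x - P.m ∧ x - P.m < 2 + 2 * P.a) := by
  have hm := P.m_def; have hL := P.L_def; have hn := P.n_eq; have hf := P.shape_facts
  have ha := P.ha
  have hxm : x = P.m + (x - P.m) := by omega
  obtain hr | hr | hr | hr : x - P.m < 2 ∨ (2 ≤ x - P.m ∧ x - P.m < 2 + 2 * P.a) ∨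
      (2 + 2 * P.a ≤ x - P.m ∧ x - P.m < 2 * P.a + P.j) ∨
      (2 * P.a + P.j ≤ x - P.m ∧ x - P.m < P.L) := by omega
  · have hp : P.par x = 0 := by rw [hxm]; exact P.par_leaf_z1 hr
    constructor
    · intro hd
      rw [P.desc_step (by omega : x ≠ 1), hp] at hd
      have := P.desc_le P.n_pos hd
      omega
    · intro h; omega
  · have hp : P.par x = P.t + 1 + (x - P.m - 2) / 2 := by
      rw [hxm]; rw [P.par_leaf_y1 hr.1 hr.2]; congr 2; omega
    have hw1 : P.t + 1 ≤ P.par x := by omega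
    have hw2 : P.par x ≤ P.t + P.a := by omega
    have hpp : P.par (P.par x) = 1 := P.par_pend1 hw1 hw2
    constructor
    · intro _; omega
    · intro _
      rw [P.desc_step (by omega : x ≠ 1), P.desc_step (by omega : P.par x ≠ 1), hpp]
      exact P.desc_refl 1
  · have hp : P.par x = 0 := by rw [hxm]; exact P.par_leaf_z2 hr.1 hr.2
    constructor
    · intro hd
      rw [P.desc_step (by omega : x ≠ 1), hp] at hd
      have := P.desc_le P.n_pos hd
      omega
    · intro h; omega
  · have hbt : P.b = 2 ∧ P.t = 2 := by omega
    have hp : P.par x = P.t + P.a + 1 + (x - P.m - (2 * P.a + P.j)) / 2 := by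
      rw [hxm]; rw [P.par_leaf_y2 hr.1 hr.2]; congr 2; omega
    have hw1 : P.t + P.a + 1 ≤ P.par x := by omega
    have hw2 : P.par x < P.m := by omega
    have hpp : P.par (P.par x) = 2 := P.par_pend2 hw1 hw2
    constructor
    · intro hd
      rw [P.desc_step (by omega : x ≠ 1), P.desc_step (by omega : P.par x ≠ 1), hpp,
        P.desc_step (by omega : (2 : ℕ) ≠ 1)] at hd
      rw [P.par_y (by omega) (by omega)] at hd
      have := P.desc_le P.n_pos hd
      omega
    · intro h; omega

lemma desc_two_leaf {x : ℕ} (hx1 : P.m ≤ x) (hx2 : x < P.n) (ht : P.t = 2) :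
    P.desc 2 x ↔ 2 * P.a + P.j ≤ x - P.m := by
  have hm := P.m_def; have hL := P.L_def; have hn := P.n_eq; have hf := P.shape_facts
  have ha := P.ha
  have hxm : x = P.m + (x - P.m) := by omega
  obtain hr | hr | hr | hr : x - P.m < 2 ∨ (2 ≤ x - P.m ∧ x - P.m < 2 + 2 * P.a) ∨
      (2 + 2 * P.a ≤ x - P.m ∧ x - P.m < 2 * P.a + P.j) ∨
      (2 * P.a + P.j ≤ x - P.m ∧ x - P.m < P.L) := by omega
  · have hp : P.par x = 0 := by rw [hxm]; exact P.par_leaf_z1 hr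
    constructor
    · intro hd
      rw [P.desc_step (by omega : x ≠ 2), hp] at hd
      have := P.desc_le P.n_pos hd
      omega
    · intro h; omega
  · have hp : P.par x = P.t + 1 + (x - P.m - 2) / 2 := by
      rw [hxm]; rw [P.par_leaf_y1 hr.1 hr.2]; congr 2; omega
    have hw1 : P.t + 1 ≤ P.par x := by omega
    have hw2 : P.par x ≤ P.t + P.a := by omega
    have hpp : P.par (P.par x) = 1 := P.par_pend1 hw1 hw2
    constructor
    · intro hd
      rw [P.desc_step (by omega : x ≠ 2), P.desc_step (by omega : P.par x ≠ 2), hpp] at hd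
      have := P.desc_le (by omega : (1:ℕ) < P.n) hd
      omega
    · intro h; omega
  · have hp : P.par x = 0 := by rw [hxm]; exact P.par_leaf_z2 hr.1 hr.2
    constructor
    · intro hd
      rw [P.desc_step (by omega : x ≠ 2), hp] at hd
      have := P.desc_le P.n_pos hd
      omega
    · intro h; omega
  · have hp : P.par x = P.t + P.a + 1 + (x - P.m - (2 * P.a + P.j)) / 2 := by
      rw [hxm]; rw [P.par_leaf_y2 hr.1 hr.2]; congr 2; omega
    have hw1 : P.t + P.a + 1 ≤ P.par x := by omega
    have hw2 : P.par x < P.m := by omega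
    have hpp : P.par (P.par x) = 2 := P.par_pend2 hw1 hw2
    constructor
    · intro _; omega
    · intro _
      rw [P.desc_step (by omega : x ≠ 2), P.desc_step (by omega : P.par x ≠ 2), hpp]
      exact P.desc_refl 2

lemma leaf_par_cases {x : ℕ} (hx1 : P.m ≤ x) (hx2 : x < P.n) :
    P.par x = 0 ∨ (P.t + 1 ≤ P.par x ∧ P.par x < P.m) := by
  have hm := P.m_def; have hL := P.L_def; have hn := P.n_eq; have hf := P.shape_facts
  have ha := P.ha
  have hxm : x = P.m + (x - P.m) := by omega
  obtain hr | hr | hr | hr : x - P.m < 2 ∨ (2 ≤ x - P.m ∧ x - P.m < 2 + 2 * P.a) ∨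
      (2 + 2 * P.a ≤ x - P.m ∧ x - P.m < 2 * P.a + P.j) ∨
      (2 * P.a + P.j ≤ x - P.m ∧ x - P.m < P.L) := by omega
  · left; rw [hxm]; exact P.par_leaf_z1 hr
  · right; rw [hxm, P.par_leaf_y1 hr.1 hr.2]; omega
  · left; rw [hxm]; exact P.par_leaf_z2 hr.1 hr.2
  · right; rw [hxm, P.par_leaf_y2 hr.1 hr.2]; omega

lemma pend_par_cases {w : ℕ} (h1 : P.t + 1 ≤ w) (h2 : w < P.m) :
    P.par w = 1 ∨ (P.par w = 2 ∧ P.t = 2) := by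
  have hm := P.m_def; have hf := P.shape_facts; have ha := P.ha
  by_cases hc : w ≤ P.t + P.a
  · left; exact P.par_pend1 h1 hc
  · right; exact ⟨P.par_pend2 (by omega) h2, by omega⟩

lemma desc_pend_leaf {w x : ℕ} (hw1 : P.t + 1 ≤ w) (hw2 : w < P.m) (hx1 : P.m ≤ x)
    (hx2 : x < P.n) : P.desc w x ↔ P.par x = w := by
  have hm := P.m_def; have hf := P.shape_facts; have ha := P.ha
  constructor
  · intro hd
    rw [P.desc_step (by omega : x ≠ w)] at hd
    rcases P.leaf_par_cases hx1 hx2 with h0 | ⟨hp1, hp2⟩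
    · exfalso; rw [h0] at hd
      have := P.desc_le P.n_pos hd
      omega
    · by_contra hne
      rw [P.desc_step hne] at hd
      rcases P.pend_par_cases hp1 hp2 with hq | ⟨hq, hw3⟩
      · rw [hq] at hd
        have := P.desc_le (by have := P.m_lt_n; have := P.m4; omega : (1:ℕ) < P.n) hd
        omega
      · rw [hq] at hd
        have := P.desc_le (by have := P.m_lt_n; have := P.m4; omega : (2:ℕ) < P.n) hd
        omega
  · exact fun h => P.desc_of_par h

lemma desc_leaf_leaf {u x : ℕ} (hu : P.m ≤ u) (hx2 : x < P.n) : P.desc u x ↔ x = u := by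
  constructor
  · intro hd
    by_contra hne
    rw [P.desc_step hne] at hd
    have h1 := P.desc_le (lt_trans (P.par_lt_m hx2) P.m_lt_n) hd
    have := P.par_lt_m hx2
    omega
  · rintro rfl; exact P.desc_refl _

/-- start position of the leaf-block of a pendant vertex `w` -/
def blk (w : ℕ) : ℕ :=
  if w ≤ P.t + P.a then 2 + 2 * (w - P.t - 1) else 2 * P.a + P.j + 2 * (w - P.t - P.a - 1)

lemma blk_range {w : ℕ} (h1 : P.t + 1 ≤ w) (h2 : w < P.m) :
    2 ≤ P.blk w ∧ P.blk w + 2 ≤ P.L := by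
  have hm := P.m_def; have hL := P.L_def; have hf := P.shape_facts; have ha := P.ha
  simp only [blk]; split_ifs <;> omega

lemma par_eq_pend_iff {w x : ℕ} (hw1 : P.t + 1 ≤ w) (hw2 : w < P.m) (hx1 : P.m ≤ x)
    (hx2 : x < P.n) :
    P.par x = w ↔ (x - P.m = P.blk w ∨ x - P.m = P.blk w + 1) := by
  have hm := P.m_def; have hL := P.L_def; have hn := P.n_eq; have hf := P.shape_facts
  have ha := P.ha
  have hxm : x = P.m + (x - P.m) := by omega
  obtain hr | hr | hr | hr : x - P.m < 2 ∨ (2 ≤ x - P.m ∧ x - P.m < 2 + 2 * P.a) ∨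
      (2 + 2 * P.a ≤ x - P.m ∧ x - P.m < 2 * P.a + P.j) ∨
      (2 * P.a + P.j ≤ x - P.m ∧ x - P.m < P.L) := by omega
  · rw [hxm, P.par_leaf_z1 hr]
    simp only [blk]; split_ifs <;> omega
  · rw [hxm, P.par_leaf_y1 hr.1 hr.2]
    simp only [blk]; split_ifs <;> omega
  · rw [hxm, P.par_leaf_z2 hr.1 hr.2]
    simp only [blk]; split_ifs <;> omega
  · rw [hxm, P.par_leaf_y2 hr.1 hr.2]
    simp only [blk]; split_ifs <;> omega


----------------- chunk 6 : planarity ------------------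

lemma set_eq_arc {Q : Fin P.n → Prop} {s len : ℕ} (hs : s < P.L) (hlen : len ≤ P.L)
    (hiff : ∀ x : Fin P.n, P.m ≤ (x : ℕ) → (Q x ↔
      ((s ≤ (x : ℕ) - P.m ∧ (x : ℕ) - P.m < s + len) ∨ ((x : ℕ) - P.m + P.L < s + len)))) :
    {x : Fin P.n | P.m ≤ (x : ℕ) ∧ Q x} = P.arc s len := by
  ext x
  rw [P.arc_mem hs hlen x]
  simp only [Set.mem_setOf_eq]
  constructor
  · rintro ⟨h1, h2⟩; exact ⟨h1, (hiff x h1).mp h2⟩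
  · rintro ⟨h1, h2⟩; exact ⟨h1, (hiff x h1).mpr h2⟩

lemma posw_lt {x : ℕ} (hx : x < 2 * P.L) : P.posw x < P.L := by
  have := P.L5; simp only [posw]; split_ifs <;> omega

lemma planar_child (w : Fin P.n) (hw : 1 ≤ (w : ℕ)) :
    (P.C.induce {x : Fin P.n | IsLeaf P.T x ∧
      (P.T.deleteEdges {s(w, P.pfin w)}).Reachable w x}).Connected := by
  have hm := P.m_def; have hL := P.L_def; have hn := P.n_eq; have hf := P.shape_facts
  have ha := P.ha
  have hset : {x : Fin P.n | IsLeaf P.T x ∧ (P.T.deleteEdges {s(w, P.pfin w)}).Reachable w x}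
      = {x : Fin P.n | P.m ≤ (x : ℕ) ∧ P.desc w x} := by
    ext x
    simp only [Set.mem_setOf_eq, P.isLeaf_iff, P.reach_iff_desc hw]
  rw [hset]
  obtain hw1 | ⟨hw2, ht2⟩ | ⟨hwp1, hwp2⟩ | hwl :
      (w : ℕ) = 1 ∨ ((w : ℕ) = 2 ∧ P.t = 2) ∨ (P.t + 1 ≤ (w : ℕ) ∧ (w : ℕ) < P.m) ∨
      P.m ≤ (w : ℕ) := by omega
  · rw [P.set_eq_arc (s := 2) (len := 2 * P.a) (by omega) (by omega) ?_]
    · exact P.arc_connected (by omega) (by omega) (by omega)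
    · intro x hx
      rw [hw1]
      rw [P.desc_one_leaf hx x.isLt]
      have := x.isLt
      omega
  · rw [P.set_eq_arc (s := 2 * P.a + P.j) (len := P.L - (2 * P.a + P.j)) (by omega) (by omega) ?_]
    · exact P.arc_connected (by omega) (by omega) (by omega)
    · intro x hx
      rw [hw2]
      rw [P.desc_two_leaf hx x.isLt ht2]
      have := x.isLt
      omega
  · rw [P.set_eq_arc (s := P.blk (w : ℕ)) (len := 2)
        (by have := P.blk_range hwp1 hwp2; omega) (by have := P.blk_range hwp1 hwp2; omega) ?_]
    · exact P.arc_connected (by have := P.blk_range hwp1 hwp2; omega) (by omega)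
        (by have := P.blk_range hwp1 hwp2; omega)
    · intro x hx
      rw [P.desc_pend_leaf hwp1 hwp2 hx x.isLt, P.par_eq_pend_iff hwp1 hwp2 hx x.isLt]
      have := x.isLt
      have := P.blk_range hwp1 hwp2
      omega
  · rw [P.set_eq_arc (s := (w : ℕ) - P.m) (len := 1)
        (by have := w.isLt; omega) (by omega) ?_]
    · exact P.arc_connected (by have := w.isLt; omega) (by omega) (by omega)
    · intro x hx
      rw [P.desc_leaf_leaf hwl x.isLt]
      have := x.isLt; have := w.isLt
      constructor
      · intro h; omega
      · intro h; omega

lemma planar_parent (w : Fin P.n) (hw : 1 ≤ (w : ℕ)) :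
    (P.C.induce {x : Fin P.n | IsLeaf P.T x ∧
      (P.T.deleteEdges {s(w, P.pfin w)}).Reachable (P.pfin w) x}).Connected := by
  have hm := P.m_def; have hL := P.L_def; have hn := P.n_eq; have hf := P.shape_facts
  have ha := P.ha
  have hset : {x : Fin P.n | IsLeaf P.T x ∧
      (P.T.deleteEdges {s(w, P.pfin w)}).Reachable (P.pfin w) x}
      = {x : Fin P.n | P.m ≤ (x : ℕ) ∧ ¬ P.desc w x} := by
    ext x
    simp only [Set.mem_setOf_eq, P.isLeaf_iff, P.parent_reach_iff hw]
  rw [hset]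
  obtain hw1 | ⟨hw2, ht2⟩ | ⟨hwp1, hwp2⟩ | hwl :
      (w : ℕ) = 1 ∨ ((w : ℕ) = 2 ∧ P.t = 2) ∨ (P.t + 1 ≤ (w : ℕ) ∧ (w : ℕ) < P.m) ∨
      P.m ≤ (w : ℕ) := by omega
  · rw [P.set_eq_arc (s := P.posw (2 + 2 * P.a)) (len := P.L - 2 * P.a)
        (P.posw_lt (by omega)) (by omega) ?_]
    · exact P.arc_connected (P.posw_lt (by omega)) (by omega) (by omega)
    · intro x hx
      rw [hw1]
      rw [P.desc_one_leaf hx x.isLt]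
      have := x.isLt
      simp only [posw]
      split_ifs <;> omega
  · rw [P.set_eq_arc (s := 0) (len := 2 * P.a + P.j) (by omega) (by omega) ?_]
    · exact P.arc_connected (by omega) (by omega) (by omega)
    · intro x hx
      rw [hw2]
      rw [P.desc_two_leaf hx x.isLt ht2]
      have := x.isLt
      omega
  · have hblk := P.blk_range hwp1 hwp2
    rw [P.set_eq_arc (s := P.posw (P.blk (w : ℕ) + 2)) (len := P.L - 2)
        (P.posw_lt (by omega)) (by omega) ?_]
    · exact P.arc_connected (P.posw_lt (by omega)) (by omega) (by omega)
    · intro x hx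
      rw [P.desc_pend_leaf hwp1 hwp2 hx x.isLt, P.par_eq_pend_iff hwp1 hwp2 hx x.isLt]
      have := x.isLt
      simp only [posw]
      split_ifs <;> omega
  · rw [P.set_eq_arc (s := P.posw ((w : ℕ) - P.m + 1)) (len := P.L - 1)
        (P.posw_lt (by have := w.isLt; omega)) (by omega) ?_]
    · exact P.arc_connected (P.posw_lt (by have := w.isLt; omega)) (by omega) (by omega)
    · intro x hx
      rw [P.desc_leaf_leaf hwl x.isLt]
      have := x.isLt; have := w.isLt
      simp only [posw]
      split_ifs <;> omega

lemma planar_all : ∀ u v : Fin P.n, P.T.Adj u v →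
    (P.C.induce {x : Fin P.n | IsLeaf P.T x ∧
      (P.T.deleteEdges {s(u, v)}).Reachable u x}).Connected := by
  intro u v hadj
  rcases hadj.2 with hp | hp
  · have hu1 : 1 ≤ (u : ℕ) := by
      rcases Nat.eq_zero_or_pos (u : ℕ) with h0 | h1
      · exfalso; rw [h0, P.par_zero] at hp; exact hadj.1 (by omega)
      · exact h1
    have hveq : v = P.pfin u := Fin.ext (by simp [hp.symm])
    rw [hveq]
    exact P.planar_child u hu1
  · have hv1 : 1 ≤ (v : ℕ) := by
      rcases Nat.eq_zero_or_pos (v : ℕ) with h0 | h1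
      · exfalso; rw [h0, P.par_zero] at hp; exact hadj.1 (by omega)
      · exact h1
    have hueq : u = P.pfin v := Fin.ext (by simp [hp.symm])
    rw [hueq, show s(P.pfin v, v) = s(v, P.pfin v) from Sym2.eq_swap]
    exact P.planar_parent v hv1


----------------- chunk 7 : edge counts ------------------

lemma ncard_val_ge (c : ℕ) (hc : c ≤ P.n) : {v : Fin P.n | c ≤ (v : ℕ)}.ncard = P.n - c := by
  rw [← Nat.card_coe_set_eq]
  have e : {v : Fin P.n | c ≤ (v : ℕ)} ≃ Fin (P.n - c) := {
    toFun := fun x => ⟨(x : Fin P.n) - c, by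
      have h1 := x.2
      have h2 := (x : Fin P.n).isLt
      simp only [Set.mem_setOf_eq] at h1
      omega⟩
    invFun := fun y => ⟨⟨(y : ℕ) + c, by have := y.isLt; omega⟩, by
      simp only [Set.mem_setOf_eq, Fin.val_mk]; omega⟩
    left_inv := fun x => by
      have h1 := x.2
      simp only [Set.mem_setOf_eq] at h1
      exact Subtype.ext (Fin.ext (by simp only [Fin.val_mk]; omega))
    right_inv := fun y => by
      exact Fin.ext (by simp only [Fin.val_mk]; omega) }
  rw [Nat.card_congr e, Nat.card_eq_fintype_card, Fintype.card_fin]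

lemma T_edgeSet_eq : P.T.edgeSet =
    (fun v : Fin P.n => s(v, P.pfin v)) '' {v : Fin P.n | 1 ≤ (v : ℕ)} := by
  ext e
  induction e using Sym2.ind with
  | _ u v =>
    rw [mem_edgeSet]
    constructor
    · intro hadj
      rcases hadj.2 with hp | hp
      · have hu1 : 1 ≤ (u : ℕ) := by
          rcases Nat.eq_zero_or_pos (u : ℕ) with h0 | h1
          · exfalso; rw [h0, P.par_zero] at hp; exact hadj.1 (by omega)
          · exact h1
        exact ⟨u, hu1, by
          show s(u, P.pfin u) = s(u, v)
          rw [show P.pfin u = v from Fin.ext (by simp [hp])]⟩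
      · have hv1 : 1 ≤ (v : ℕ) := by
          rcases Nat.eq_zero_or_pos (v : ℕ) with h0 | h1
          · exfalso; rw [h0, P.par_zero] at hp; exact hadj.1 (by omega)
          · exact h1
        exact ⟨v, hv1, by
          show s(v, P.pfin v) = s(u, v)
          rw [show P.pfin v = u from Fin.ext (by simp [hp])]
          exact Sym2.eq_swap⟩
    · rintro ⟨w, hw, heq⟩
      simp only [Set.mem_setOf_eq] at hw
      have hplt := P.par_lt_self hw w.isLt
      rw [Sym2.eq_iff] at heq
      rcases heq with ⟨h1, h2⟩ | ⟨h1, h2⟩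
      · have e1 : (w : ℕ) = (u : ℕ) := congrArg Fin.val h1
        have e2 : P.par (w : ℕ) = (v : ℕ) := congrArg Fin.val h2
        exact ⟨by omega, Or.inl (by rw [← e1]; exact e2)⟩
      · have e1 : (w : ℕ) = (v : ℕ) := congrArg Fin.val h1
        have e2 : P.par (w : ℕ) = (u : ℕ) := congrArg Fin.val h2
        exact ⟨by omega, Or.inr (by rw [← e1]; exact e2)⟩

lemma T_edge_count : P.T.edgeSet.ncard = P.n - 1 := by
  rw [P.T_edgeSet_eq, Set.ncard_image_of_injOn, P.ncard_val_ge 1 (by have := P.n_pos; omega)]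
  intro x hx y hy heq
  simp only [Set.mem_setOf_eq] at hx hy
  rw [Sym2.eq_iff] at heq
  rcases heq with ⟨h1, _⟩ | ⟨h1, h2⟩
  · exact h1
  · exfalso
    have e1 : (x : ℕ) = P.par y := by have := congrArg Fin.val h1; simpa using this
    have e2 : P.par x = (y : ℕ) := by have := congrArg Fin.val h2; simpa using this
    have := P.par_lt_self hx x.isLt
    have := P.par_lt_self hy y.isLt
    omega

/-- next vertex on the cycle as Fin -/
def nfin (v : Fin P.n) : Fin P.n := ⟨P.nxt v, P.nxt_lt⟩

lemma C_edgeSet_eq : P.C.edgeSet =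
    (fun v : Fin P.n => s(v, P.nfin v)) '' {v : Fin P.n | P.m ≤ (v : ℕ)} := by
  have hn := P.n_eq; have hL := P.L5
  ext e
  induction e using Sym2.ind with
  | _ u v =>
    rw [mem_edgeSet]
    constructor
    · rintro ⟨hne, hum, hvm, hor | hor⟩
      · exact ⟨u, hum, by
          show s(u, P.nfin u) = s(u, v)
          rw [show P.nfin u = v from Fin.ext (by simp [nfin, hor])]⟩
      · exact ⟨v, hvm, by
          show s(v, P.nfin v) = s(u, v)
          rw [show P.nfin v = u from Fin.ext (by simp [nfin, hor])]
          exact Sym2.eq_swap⟩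
    · rintro ⟨w, hw, heq⟩
      simp only [Set.mem_setOf_eq] at hw
      have hwlt := w.isLt
      rw [Sym2.eq_iff] at heq
      rcases heq with ⟨h1, h2⟩ | ⟨h1, h2⟩
      · have e1 : (w : ℕ) = (u : ℕ) := congrArg Fin.val h1
        have e2 : P.nxt (w : ℕ) = (v : ℕ) := congrArg Fin.val h2
        refine ⟨?_, by omega, ?_, Or.inl (by rw [← e1]; exact e2)⟩ <;>
          (simp only [nxt] at e2; split_ifs at e2 <;> omega)
      · have e1 : (w : ℕ) = (v : ℕ) := congrArg Fin.val h1
        have e2 : P.nxt (w : ℕ) = (u : ℕ) := congrArg Fin.val h2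
        refine ⟨?_, ?_, by omega, Or.inr (by rw [← e1]; exact e2)⟩ <;>
          (simp only [nxt] at e2; split_ifs at e2 <;> omega)

lemma C_edge_count : P.C.edgeSet.ncard = P.L := by
  have hn := P.n_eq; have hL := P.L5
  rw [P.C_edgeSet_eq, Set.ncard_image_of_injOn, P.ncard_val_ge P.m (by omega)]
  · omega
  · intro x hx y hy heq
    simp only [Set.mem_setOf_eq] at hx hy
    rw [Sym2.eq_iff] at heq
    rcases heq with ⟨h1, _⟩ | ⟨h1, h2⟩
    · exact h1
    · exfalso
      have e1 : (x : ℕ) = P.nxt y := by have := congrArg Fin.val h1; simpa [nfin] using this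
      have e2 : P.nxt x = (y : ℕ) := by have := congrArg Fin.val h2; simpa [nfin] using this
      have hx2 := x.isLt; have hy2 := y.isLt
      simp only [nxt] at e1 e2
      split_ifs at e1 e2 <;> omega

lemma TC_disjoint : Disjoint P.T.edgeSet P.C.edgeSet := by
  rw [Set.disjoint_left]
  intro e heT heC
  induction e using Sym2.ind with
  | _ u v =>
    rw [mem_edgeSet] at heT heC
    obtain ⟨_, hum, hvm, _⟩ := heC
    have h1 := P.par_lt_m u.isLt
    have h2 := P.par_lt_m v.isLt
    rcases heT.2 with hp | hp <;> omega

lemma H_edge_count : (P.T ⊔ P.C).edgeSet.ncard = P.n - 1 + P.L := by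
  rw [edgeSet_sup, Set.ncard_union_eq P.TC_disjoint (Set.toFinite _) (Set.toFinite _),
    P.T_edge_count, P.C_edge_count]

----------------- chunk 8 : C4-freeness ------------------

lemma par_ne_two_apart {q q' : ℕ} (hq : q < P.L) (hq' : q' < P.L)
    (hrel : q + 2 = q' ∨ q + 2 = q' + P.L) : P.par (P.m + q) ≠ P.par (P.m + q') := by
  have hm := P.m_def; have hL := P.L_def; have hf := P.shape_facts
  have ha := P.ha
  simp only [par, Nat.add_sub_cancel_left]
  split_ifs <;> omega

lemma DT {x : ℕ} (h1 : P.m ≤ x) (h2 : x < P.n) : P.par x ≠ P.par (P.nxt (P.nxt x)) := by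
  have hm := P.m_def; have hL := P.L_def; have hn := P.n_eq; have hf := P.shape_facts
  have hxm : x = P.m + (x - P.m) := by omega
  obtain hc | hc | hc : (x + 2 < P.n) ∨ (x + 2 = P.n) ∨ (x + 1 = P.n) := by omega
  · have hval : P.nxt (P.nxt x) = P.m + (x - P.m + 2) := by
      simp only [nxt]; split_ifs <;> omega
    have key := P.par_ne_two_apart (q := x - P.m) (q' := x - P.m + 2)
      (by omega) (by omega) (by omega)
    rw [← hxm] at key
    rw [hval]
    exact key
  · have hval : P.nxt (P.nxt x) = P.m + 0 := by
      simp only [nxt]; split_ifs <;> omega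
    have key := P.par_ne_two_apart (q := x - P.m) (q' := 0)
      (by omega) (by omega) (by omega)
    rw [← hxm] at key
    rw [hval]
    exact key
  · have hval : P.nxt (P.nxt x) = P.m + 1 := by
      simp only [nxt]; split_ifs <;> omega
    have key := P.par_ne_two_apart (q := x - P.m) (q' := 1)
      (by omega) (by omega) (by omega)
    rw [← hxm] at key
    rw [hval]
    exact key

lemma PNA {x y : ℕ} (hx1 : P.m ≤ x) (hx2 : x < P.n) (hy1 : P.m ≤ y) (hy2 : y < P.n)
    (hne : P.par x ≠ P.par y) :
    ¬ (P.par (P.par x) = P.par y ∨ P.par (P.par y) = P.par x) := by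
  have hm := P.m_def; have hf := P.shape_facts; have ha := P.ha
  have hz := P.par_zero
  have cx := P.leaf_par_cases hx1 hx2
  have cy := P.leaf_par_cases hy1 hy2
  rcases cx with cx | ⟨cx1, cx2⟩ <;> rcases cy with cy | ⟨cy1, cy2⟩
  · omega
  · rcases P.pend_par_cases cy1 cy2 with hq | ⟨hq, ht2⟩ <;>
      (rintro (h | h) <;> rw [cx, hz] at * <;> omega)
  · rcases P.pend_par_cases cx1 cx2 with hq | ⟨hq, ht2⟩ <;>
      (rintro (h | h) <;> rw [cy, hz] at * <;> omega)
  · rcases P.pend_par_cases cx1 cx2 with hqx | ⟨hqx, htx⟩ <;>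
      rcases P.pend_par_cases cy1 cy2 with hqy | ⟨hqy, hty⟩ <;>
      (rintro (h | h) <;> omega)

lemma tmax {x y z : Fin P.n} (hxy : P.T.Adj x y) (hxz : P.T.Adj x z)
    (hy : (y : ℕ) ≤ (x : ℕ)) (hz : (z : ℕ) ≤ (x : ℕ)) : y = z := by
  have key : ∀ w : Fin P.n, P.T.Adj x w → (w : ℕ) ≤ (x : ℕ) → P.par x = (w : ℕ) := by
    intro w hadj hle
    rcases hadj.2 with h | h
    · exact h
    · exfalso
      rcases Nat.eq_zero_or_pos (w : ℕ) with h0 | hw1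
      · rw [h0, P.par_zero] at h; exact hadj.1 (by omega)
      · have := P.par_lt_self hw1 w.isLt; omega
  exact Fin.ext ((key y hxy hy).symm.trans (key z hxz hz))

lemma nxt_inj {x y : ℕ} (hx1 : P.m ≤ x) (hx2 : x < P.n) (hy1 : P.m ≤ y) (hy2 : y < P.n)
    (h : P.nxt x = P.nxt y) : x = y := by
  have hn := P.n_eq; have hL := P.L5
  simp only [nxt] at h; split_ifs at h <;> omega

lemma quadC {v0 v1 v2 v3 : Fin P.n} (hnext : P.nxt (v0 : ℕ) = (v1 : ℕ))
    (h0m : P.m ≤ (v0 : ℕ)) (h1m : P.m ≤ (v1 : ℕ))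
    (h12 : (P.T ⊔ P.C).Adj v1 v2) (h23 : (P.T ⊔ P.C).Adj v2 v3)
    (h30 : (P.T ⊔ P.C).Adj v3 v0)
    (d01 : v0 ≠ v1) (d02 : v0 ≠ v2) (d03 : v0 ≠ v3) (d12 : v1 ≠ v2) (d13 : v1 ≠ v3)
    (d23 : v2 ≠ v3) : False := by
  have hn := P.n_eq; have hL := P.L5
  have d02' : (v0 : ℕ) ≠ (v2 : ℕ) := fun h => d02 (Fin.ext h)
  have d13' : (v1 : ℕ) ≠ (v3 : ℕ) := fun h => d13 (Fin.ext h)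
  have d23' : (v2 : ℕ) ≠ (v3 : ℕ) := fun h => d23 (Fin.ext h)
  -- determine v2
  have hv2 : (v2 : ℕ) = P.par v1 ∨ (P.m ≤ (v2 : ℕ) ∧ P.nxt (v1 : ℕ) = (v2 : ℕ)) := by
    rcases (sup_adj _ _ _ _).mp h12 with hT | hC
    · rcases hT.2 with h | h
      · exact Or.inl h.symm
      · exfalso; have := P.par_lt_m v2.isLt; omega
    · obtain ⟨_, _, hm2, hor | hor⟩ := hC
      · exact Or.inr ⟨hm2, hor⟩
      · exfalso
        exact d02' (P.nxt_inj h0m v0.isLt hm2 v2.isLt (by rw [hnext, hor]))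
  -- determine v3
  have hv3 : (v3 : ℕ) = P.par v0 ∨ (P.m ≤ (v3 : ℕ) ∧ P.nxt (v3 : ℕ) = (v0 : ℕ)) := by
    rcases (sup_adj _ _ _ _).mp h30 with hT | hC
    · rcases hT.2 with h | h
      · exfalso; have := P.par_lt_m v3.isLt; omega
      · exact Or.inl h.symm
    · obtain ⟨_, hm3, _, hor | hor⟩ := hC
      · exact Or.inr ⟨hm3, hor⟩
      · exfalso; rw [hnext] at hor; exact d13' hor
  rcases hv2 with h2p | ⟨h2m, h2x⟩ <;> rcases hv3 with h3p | ⟨h3m, h3x⟩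
  · -- both parents
    have h2lt : (v2 : ℕ) < P.m := by rw [h2p]; exact P.par_lt_m v1.isLt
    rcases (sup_adj _ _ _ _).mp h23 with hT | hC
    · refine P.PNA h1m v1.isLt h0m v0.isLt (by omega) ?_
      rcases hT.2 with h | h
      · exact Or.inl (by rw [← h2p, ← h3p]; exact h)
      · exact Or.inr (by rw [← h2p, ← h3p]; exact h)
    · obtain ⟨_, hm2, _, _⟩ := hC; omega
  · -- v2 parent, v3 leaf
    have h2lt : (v2 : ℕ) < P.m := by rw [h2p]; exact P.par_lt_m v1.isLt
    rcases (sup_adj _ _ _ _).mp h23 with hT | hC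
    · rcases hT.2 with h | h
      · have := P.par_lt_m v2.isLt; omega
      · -- par v3 = v2 = par v1 : contradicts DT at v3
        refine P.DT h3m v3.isLt ?_
        rw [h3x, hnext, h, h2p]
    · obtain ⟨_, hm2, _, _⟩ := hC; omega
  · -- v2 leaf, v3 parent
    have h3lt : (v3 : ℕ) < P.m := by rw [h3p]; exact P.par_lt_m v0.isLt
    rcases (sup_adj _ _ _ _).mp h23 with hT | hC
    · rcases hT.2 with h | h
      · -- par v2 = v3 = par v0 : contradicts DT at v0
        refine P.DT h0m v0.isLt ?_
        rw [hnext, h2x, h, h3p]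
      · have := P.par_lt_m v3.isLt; omega
    · obtain ⟨_, _, hm3, _⟩ := hC; omega
  · -- both leaves
    rcases (sup_adj _ _ _ _).mp h23 with hT | hC
    · rcases hT.2 with h | h
      · have := P.par_lt_m v2.isLt; omega
      · have := P.par_lt_m v3.isLt; omega
    · obtain ⟨_, _, _, hor | hor⟩ := hC
      · -- 4-cycle in C
        have e1 := hnext
        have e2 := h2x
        have e3 := hor
        have e4 := h3x
        have l0 := v0.isLt; have l1 := v1.isLt; have l2 := v2.isLt; have l3 := v3.isLt
        simp only [nxt] at e1 e2 e3 e4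
        split_ifs at e1 e2 e3 e4 <;> omega
      · exact d02' (by rw [← h3x, hor])

lemma quadC' {v0 v1 v2 v3 : Fin P.n} (hc : P.C.Adj v0 v1)
    (h12 : (P.T ⊔ P.C).Adj v1 v2) (h23 : (P.T ⊔ P.C).Adj v2 v3)
    (h30 : (P.T ⊔ P.C).Adj v3 v0)
    (d01 : v0 ≠ v1) (d02 : v0 ≠ v2) (d03 : v0 ≠ v3) (d12 : v1 ≠ v2) (d13 : v1 ≠ v3)
    (d23 : v2 ≠ v3) : False := by
  obtain ⟨_, h0m, h1m, hor | hor⟩ := hc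
  · exact P.quadC hor h0m h1m h12 h23 h30 d01 d02 d03 d12 d13 d23
  · exact P.quadC hor h1m h0m h30.symm h23.symm h12.symm d01.symm d13 d12
      d03 d02 (Ne.symm d23)

lemma quad {v0 v1 v2 v3 : Fin P.n} (h01 : (P.T ⊔ P.C).Adj v0 v1)
    (h12 : (P.T ⊔ P.C).Adj v1 v2) (h23 : (P.T ⊔ P.C).Adj v2 v3)
    (h30 : (P.T ⊔ P.C).Adj v3 v0)
    (d01 : v0 ≠ v1) (d02 : v0 ≠ v2) (d03 : v0 ≠ v3) (d12 : v1 ≠ v2) (d13 : v1 ≠ v3)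
    (d23 : v2 ≠ v3) : False := by
  rcases (sup_adj _ _ _ _).mp h01 with t01 | c01
  swap
  · exact P.quadC' c01 h12 h23 h30 d01 d02 d03 d12 d13 d23
  rcases (sup_adj _ _ _ _).mp h12 with t12 | c12
  swap
  · exact P.quadC' c12 h23 h30 h01 d12 d13 (Ne.symm d01) d23 (Ne.symm d02) (Ne.symm d03)
  rcases (sup_adj _ _ _ _).mp h23 with t23 | c23
  swap
  · exact P.quadC' c23 h30 h01 h12 d23 (Ne.symm d02) (Ne.symm d12)
      (Ne.symm d03) (Ne.symm d13) d01
  rcases (sup_adj _ _ _ _).mp h30 with t30 | c30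
  swap
  · exact P.quadC' c30 h01 h12 h23 (Ne.symm d03) (Ne.symm d13)
      (Ne.symm d23) d01 d02 d12
  -- all tree edges: take the maximum
  obtain h | h | h | h :
      ((v1:ℕ) ≤ v0 ∧ (v2:ℕ) ≤ v0 ∧ (v3:ℕ) ≤ v0) ∨
      ((v0:ℕ) ≤ v1 ∧ (v2:ℕ) ≤ v1 ∧ (v3:ℕ) ≤ v1) ∨
      ((v0:ℕ) ≤ v2 ∧ (v1:ℕ) ≤ v2 ∧ (v3:ℕ) ≤ v2) ∨
      ((v0:ℕ) ≤ v3 ∧ (v1:ℕ) ≤ v3 ∧ (v2:ℕ) ≤ v3) := by omega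
  · exact d13 (P.tmax t01 t30.symm h.1 h.2.2)
  · exact d02 (P.tmax t01.symm t12 h.1 h.2.1)
  · exact d13 (P.tmax t12.symm t23 h.2.1 h.2.2)
  · exact d02 (P.tmax t23.symm t30 h.2.2 h.1).symm

----------------- chunk 9 : C4Free and assembly ------------------

lemma H_C4Free : C4Free (P.T ⊔ P.C) := by
  intro v w hcyc hlen
  cases w with
  | nil => simp at hlen
  | cons h01 p =>
  rename_i v1
  cases p with
  | nil => simp at hlen
  | cons h12 p =>
  rename_i v2
  cases p with
  | nil => simp at hlen
  | cons h23 p =>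
  rename_i v3
  cases p with
  | nil => simp at hlen
  | cons h30 p =>
  rename_i v4
  cases p with
  | cons h45 p => simp [SimpleGraph.Walk.length_cons] at hlen
  | nil =>
    have hnodup := hcyc.support_nodup
    simp only [SimpleGraph.Walk.support_cons, SimpleGraph.Walk.support_nil, List.tail_cons,
      List.nodup_cons, List.mem_cons, List.mem_singleton, List.not_mem_nil, or_false,
      not_or, List.nodup_nil, and_true] at hnodup
    obtain ⟨⟨h12', h13', h1v⟩, ⟨h23', h2v⟩, h3v, -⟩ := hnodup
    exact P.quad h01 h12 h23 h30 (Ne.symm h1v) (Ne.symm h2v) (Ne.symm h3v) h12' h13' h23'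

def halin : HalinGraph (Fin P.n) where
  T := P.T
  C := P.C
  tree_isTree := P.T_isTree
  four_le_card := by
    have := P.m4; have := P.m_lt_n
    simp only [Fintype.card_fin]
    omega
  nonleaf_degree := by
    intro v hv
    refine P.ncDeg_T_internal ?_
    rw [P.isLeaf_iff] at hv
    omega
  support_C := by
    rw [P.support_C_eq]
    ext v
    simp only [Set.mem_setOf_eq, P.isLeaf_iff]
  two_regular := by
    intro v hv
    rw [P.support_C_eq] at hv
    exact P.ncDeg_C_leaf hv
  cycle_connected := by
    rw [P.support_C_eq]
    have hset : {v : Fin P.n | P.m ≤ (v : ℕ)} = P.arc 0 P.L := by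
      ext x
      rw [P.arc_mem (by have := P.L5; omega) le_rfl x]
      have := x.isLt; have hn := P.n_eq
      simp only [Set.mem_setOf_eq]
      omega
    rw [hset]
    exact P.arc_connected (by have := P.L5; omega) (by have := P.L5; omega) le_rfl
  planar := P.planar_all

lemma halin_C4Free : C4Free (P.halin).graph := P.H_C4Free

lemma halin_count : eCount (P.halin).graph = P.n - 1 + P.L := P.H_edge_count

end HP
end HalinAux

/-- Lower bound: for every `n ≥ 16` there is an `n`-vertex `C₄`-free Halin graph with
`5(n-1)/3` edges if `n ≡ 1 (mod 3)`, `5(n-2)/3 + 1` edges if `n ≡ 2 (mod 3)`, and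
`5(n-3)/3 + 3` edges if `n ≡ 0 (mod 3)`. -/
theorem halin_turan_C4_lower (n : ℕ) (hn : 16 ≤ n) :
    ∃ H : HalinGraph (Fin n), C4Free H.graph ∧
      eCount H.graph =
        (if n % 3 = 1 then 5 * (n - 1) / 3
      else if n % 3 = 2 then 5 * (n - 2) / 3 + 1
      else 5 * (n - 3) / 3 + 3) := by
  obtain h | h | h : n % 3 = 1 ∨ n % 3 = 2 ∨ n % 3 = 0 := by omega
  · refine ⟨(HalinAux.HP.halin ⟨n, 1, 2, (n - 4) / 3, 0, by omega,
      Or.inl ⟨rfl, rfl, rfl⟩, by omega⟩ : HalinGraph (Fin n)),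
      HalinAux.HP.halin_C4Free _, ?_⟩
    rw [HalinAux.HP.halin_count, if_pos h]
    show n - 1 + (2 + 2 * ((n - 4) / 3 + 0)) = 5 * (n - 1) / 3
    omega
  · refine ⟨(HalinAux.HP.halin ⟨n, 2, 2, (n - 11) / 3, 2, by omega,
      Or.inr (Or.inl ⟨rfl, rfl, rfl⟩), by omega⟩ : HalinGraph (Fin n)),
      HalinAux.HP.halin_C4Free _, ?_⟩
    rw [HalinAux.HP.halin_count, if_neg (by omega), if_pos h]
    show n - 1 + (2 + 2 * ((n - 11) / 3 + 2)) = 5 * (n - 2) / 3 + 1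
    omega
  · refine ⟨(HalinAux.HP.halin ⟨n, 2, 3, (n - 12) / 3, 2, by omega,
      Or.inr (Or.inr ⟨rfl, rfl, rfl⟩), by omega⟩ : HalinGraph (Fin n)),
      HalinAux.HP.halin_C4Free _, ?_⟩
    rw [HalinAux.HP.halin_count, if_neg (by omega), if_neg (by omega)]
    show n - 1 + (3 + 2 * ((n - 12) / 3 + 2)) = 5 * (n - 3) / 3 + 3
    omega
end

section
/- Let H be an n-vertex C4-free Halin graph with characteristic tree T. If every longest path in T has length exactly 4, then 3 divides n − 1 and e(H) = 5(n−1)/3. -/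
open SimpleGraph

section Basics
variable {V : Type*} [Fintype V] {T : SimpleGraph V}

variable {V : Type*} [Fintype V] {T : SimpleGraph V}

omit [Fintype V] in
lemma leaf_iff {v : V} : IsLeaf T v ↔ ∃ w, T.neighborSet v = {w} := by
  simp [IsLeaf, ncDeg, Set.ncard_eq_one]

omit [Fintype V] in
lemma not_leaf_of_two {v x y : V} (hx : T.Adj v x) (hy : T.Adj v y) (hxy : x ≠ y) :
    ¬ IsLeaf T v := by
  rw [leaf_iff]
  rintro ⟨w, hw⟩
  have h1 : x ∈ T.neighborSet v := hx
  have h2 : y ∈ T.neighborSet v := hy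
  rw [hw] at h1 h2
  exact hxy (h1.trans h2.symm)

omit [Fintype V] in
lemma leaf_adj {v w : V} (hv : IsLeaf T v) (h : T.Adj v w) : T.neighborSet v = {w} := by
  obtain ⟨u, hu⟩ := leaf_iff.mp hv
  have : w ∈ T.neighborSet v := h
  rw [hu] at this ⊢
  simp_all

/-- In a connected graph on ≥ 3 vertices, two leaves are not adjacent. -/
lemma leaves_not_adj (hconn : T.Connected) (hcard : 3 ≤ Fintype.card V)
    {u v : V} (hu : IsLeaf T u) (hv : IsLeaf T v) : ¬ T.Adj u v := by
  classical
  intro hadj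
  have hNu : T.neighborSet u = {v} := leaf_adj hu hadj
  have hNv : T.neighborSet v = {u} := leaf_adj hv hadj.symm
  have : ∃ w : V, w ≠ u ∧ w ≠ v := by
    by_contra h
    push_neg at h
    have hsub : (Finset.univ : Finset V) ⊆ {u, v} := by
      intro w _
      rcases eq_or_ne w u with rfl | hw
      · simp
      · simp [h w hw]
    have := Finset.card_le_card hsub
    have h2 : ({u, v} : Finset V).card ≤ 2 := Finset.card_insert_le _ _ |>.trans (by simp)
    simp [Finset.card_univ] at this
    omega
  obtain ⟨w, hwu, hwv⟩ := this
  obtain ⟨p0⟩ := hconn u w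
  obtain ⟨p, hp⟩ := p0.toPath
  cases p with
  | nil => exact hwu rfl
  | cons h q =>
    rename_i x
    have hxv : x = v := by
      have : x ∈ T.neighborSet u := h
      rw [hNu] at this; exact this
    cases q with
    | nil => exact hwv (hxv ▸ rfl)
    | cons h2 r =>
      rename_i y
      have hyu : y = u := by
        have : y ∈ T.neighborSet x := h2
        rw [hxv, hNv] at this; exact this
      rw [Walk.cons_isPath_iff, Walk.cons_isPath_iff] at hp
      exact hp.2 (by rw [Walk.support_cons]; exact List.mem_cons_of_mem _ (hyu ▸ r.start_mem_support))


end Basics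

section L1
variable {V : Type*} [DecidableEq V] {T : SimpleGraph V}

variable {V : Type*} [DecidableEq V] {T : SimpleGraph V}

lemma support_head (hac : T.IsAcyclic) {a b x : V} {p : T.Walk a b} (hp : p.IsPath)
    (hadj : T.Adj a x) (hx : x ∈ p.support) : p.support.tail.head? = some x := by
  have hq : (p.takeUntil x hx).IsPath := hp.takeUntil hx
  have he : (Walk.cons hadj Walk.nil).IsPath := by simp [hadj.ne]
  have heq : (⟨p.takeUntil x hx, hq⟩ : T.Path a x) = ⟨Walk.cons hadj Walk.nil, he⟩ :=
    hac.path_unique _ _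
  have hq2 : p.takeUntil x hx = Walk.cons hadj Walk.nil := congrArg Subtype.val heq
  have hsup : p.support = (p.takeUntil x hx).support ++ (p.dropUntil x hx).support.tail := by
    conv_lhs => rw [← Walk.take_spec p hx]
    rw [Walk.support_append]
  rw [hq2] at hsup
  simp only [Walk.support_cons, Walk.support_nil] at hsup
  rw [hsup]
  simp
  rw [Walk.support_eq_cons]; rfl

lemma exists_extension (hac : T.IsAcyclic) {a b : V} {p : T.Walk a b} (hp : p.IsPath)
    (hdeg : 3 ≤ (T.neighborSet a).ncard) : ∃ x, T.Adj a x ∧ x ∉ p.support := by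
  by_contra h
  push_neg at h
  obtain ⟨x0, hx0⟩ := Set.nonempty_of_ncard_ne_zero (s := T.neighborSet a) (by omega)
  have hsub : T.neighborSet a ⊆ {x0} := by
    intro x hx
    have h1 := support_head hac hp hx (h x hx)
    have h2 := support_head hac hp hx0 (h x0 hx0)
    rw [h1] at h2
    have := h2.symm; simp only [Option.some.injEq] at this; exact this.symm
  have := Set.ncard_le_ncard hsub (Set.finite_singleton _)
  simp [Set.ncard_singleton] at this
  omega


end L1

lemma edges_mapLe {W : Type*} {G G' : SimpleGraph W} (h : G ≤ G') {u v : W} (p : G.Walk u v) :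
    (p.mapLe h).edges = p.edges := by
  induction p with
  | nil => rfl
  | cons hadj q ih =>
    show _ :: _ = _ :: _
    exact congrArg₂ List.cons rfl ih

lemma eCount_eq_card_edgeFinset {W : Type*} {G : SimpleGraph W} [Fintype G.edgeSet] :
    eCount G = G.edgeFinset.card := by
  rw [eCount, ← Nat.card_coe_set_eq, Nat.card_eq_fintype_card, SimpleGraph.edgeFinset_card]

lemma HalinGraph.card3 {V : Type*} [Fintype V] (H : HalinGraph V) : 3 ≤ Fintype.card V := by
  have := H.four_le_card; omega

section Halin
variable {V : Type*} [Fintype V] [DecidableEq V] (H : HalinGraph V)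

/-- Endpoints of a maximum-length (4) path are leaves. -/
lemma start_leaf (hmax : ∀ (a b : V) (p : H.T.Walk a b), p.IsPath → p.length ≤ 4)
    {a b : V} (p : H.T.Walk a b) (hp : p.IsPath) (hlen : p.length = 4) : IsLeaf H.T a := by
  by_contra hnl
  have hdeg := H.nonleaf_degree a hnl
  obtain ⟨x, hadj, hx⟩ := exists_extension H.tree_isTree.IsAcyclic hp hdeg
  have hpath : (Walk.cons hadj.symm p).IsPath := (Walk.cons_isPath_iff _ _).2 ⟨hp, hx⟩
  have := hmax _ _ _ hpath
  simp [hlen] at this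

lemma end_leaf (hmax : ∀ (a b : V) (p : H.T.Walk a b), p.IsPath → p.length ≤ 4)
    {a b : V} (p : H.T.Walk a b) (hp : p.IsPath) (hlen : p.length = 4) : IsLeaf H.T b :=
  start_leaf H hmax p.reverse (hp.reverse) (by simp [hlen])

lemma extend2 (hmax : ∀ (a b : V) (p : H.T.Walk a b), p.IsPath → p.length ≤ 4)
    {z0 z1 c u : V} (h01 : H.T.Adj z0 z1) (h1c : H.T.Adj z1 c) (h0c : z0 ≠ c)
    {r : H.T.Walk c u} (hr : r.IsPath) (h0 : z0 ∉ r.support) (h1 : z1 ∉ r.support) :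
    r.length + 2 ≤ 4 ∧ (r.length = 2 → IsLeaf H.T u) := by
  have hw : (Walk.cons h01 (Walk.cons h1c r)).IsPath := by
    rw [Walk.cons_isPath_iff, Walk.cons_isPath_iff]
    refine ⟨⟨hr, h1⟩, ?_⟩
    rw [Walk.support_cons]
    simp only [List.mem_cons]
    rintro (rfl | hmem)
    · exact h01.ne rfl
    · exact h0 hmem
  have hlen : (Walk.cons h01 (Walk.cons h1c r)).length = r.length + 2 := by simp
  refine ⟨by have := hmax _ _ _ hw; omega, fun h2 => ?_⟩
  exact end_leaf H hmax _ hw (by omega)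

lemma center_structure (hmax : ∀ (a b : V) (p : H.T.Walk a b), p.IsPath → p.length ≤ 4)
    {v0 v1 v2 v3 v4 : V}
    (h01 : H.T.Adj v0 v1) (h12 : H.T.Adj v1 v2) (h23 : H.T.Adj v2 v3) (h34 : H.T.Adj v3 v4)
    (hnd : ([v0, v1, v2, v3, v4] : List V).Nodup) :
    ∀ u : V, ¬ IsLeaf H.T u → u = v2 ∨ H.T.Adj v2 u := by
  simp only [List.nodup_cons, List.mem_cons, List.nodup_nil, List.not_mem_nil, or_false,
    and_true, not_or] at hnd
  obtain ⟨⟨hn01, hn02, hn03, hn04⟩, ⟨hn12, hn13, hn14⟩, ⟨hn23, hn24⟩, hn34, -⟩ := hnd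
  intro u hu
  by_cases hyp : u = v2
  · exact Or.inl hyp
  right
  obtain ⟨r0⟩ := H.tree_isTree.isConnected v2 u
  obtain ⟨r, hr⟩ := r0.toPath
  have hne : r.length ≠ 0 := fun h => hyp (Walk.eq_of_length_eq_zero h).symm
  by_cases hlen1 : r.length = 1
  · -- r is a single edge
    cases r with
    | nil => simp at hne
    | cons h q =>
      rename_i x
      have : q.length = 0 := by simpa using hlen1
      have := Walk.eq_of_length_eq_zero this
      subst this
      exact h
  · have hge : 2 ≤ r.length := by omega
    exfalso
    have K1 : v0 ∈ r.support → v1 ∈ r.support := by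
      intro h0
      have htk : (r.takeUntil v0 h0).IsPath := hr.takeUntil h0
      have he : (Walk.cons h12.symm (Walk.cons h01.symm Walk.nil)).IsPath := by
        simp
        tauto
      have heq : (⟨r.takeUntil v0 h0, htk⟩ : H.T.Path v2 v0) = ⟨_, he⟩ :=
        H.tree_isTree.IsAcyclic.path_unique _ _
      have hq2 : r.takeUntil v0 h0 = Walk.cons h12.symm (Walk.cons h01.symm Walk.nil) :=
        congrArg Subtype.val heq
      have : v1 ∈ (r.takeUntil v0 h0).support := by rw [hq2]; simp
      exact Walk.support_takeUntil_subset _ _ this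
    have K2 : v4 ∈ r.support → v3 ∈ r.support := by
      intro h4
      have htk : (r.takeUntil v4 h4).IsPath := hr.takeUntil h4
      have he : (Walk.cons h23 (Walk.cons h34 Walk.nil)).IsPath := by
        simp
        tauto
      have heq : (⟨r.takeUntil v4 h4, htk⟩ : H.T.Path v2 v4) = ⟨_, he⟩ :=
        H.tree_isTree.IsAcyclic.path_unique _ _
      have hq2 : r.takeUntil v4 h4 = Walk.cons h23 (Walk.cons h34 Walk.nil) :=
        congrArg Subtype.val heq
      have : v3 ∈ (r.takeUntil v4 h4).support := by rw [hq2]; simp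
      exact Walk.support_takeUntil_subset _ _ this
    have K3 : ¬ (v1 ∈ r.support ∧ v3 ∈ r.support) := by
      rintro ⟨hm1, hm3⟩
      have e1 := support_head H.tree_isTree.IsAcyclic hr h12.symm hm1
      have e3 := support_head H.tree_isTree.IsAcyclic hr h23 hm3
      rw [e1] at e3
      simp only [Option.some.injEq] at e3
      exact hn13 e3
    by_cases hv1 : v1 ∈ r.support
    · have hv3 : v3 ∉ r.support := fun h3 => K3 ⟨hv1, h3⟩
      have hv4 : v4 ∉ r.support := fun h4 => hv3 (K2 h4)
      obtain ⟨hle, hlf⟩ := extend2 H hmax h34.symm h23.symm (Ne.symm hn24) hr hv4 hv3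
      exact hu (hlf (by omega))
    · have hv0 : v0 ∉ r.support := fun h0 => hv1 (K1 h0)
      obtain ⟨hle, hlf⟩ := extend2 H hmax h01 h12 hn02 hr hv0 hv1
      exact hu (hlf (by omega))

/-- Build a contradiction from a 4-cycle. -/
lemma c4_of_square {W : Type*} {G : SimpleGraph W} (hfree : C4Free G) {a b c d : W}
    (hab : G.Adj a b) (hbc : G.Adj b c) (hcd : G.Adj c d) (hda : G.Adj d a)
    (hac : a ≠ c) (hbd : b ≠ d) : False := by
  have hw : (Walk.cons hab (Walk.cons hbc (Walk.cons hcd (Walk.cons hda Walk.nil)))).IsCycle := by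
    simp only [Walk.isCycle_def, Walk.isTrail_def, Walk.edges_cons, Walk.edges_nil,
      Walk.support_cons, Walk.support_nil, List.tail_cons, ne_eq, List.nodup_cons,
      List.mem_cons, List.not_mem_nil, or_false, List.nodup_nil, and_true, not_or]
    have h1 := hab.ne
    have h2 := hbc.ne
    have h3 := hcd.ne
    have h4 := hda.ne
    simp [Sym2.eq, Sym2.rel_iff']
    tauto
  exact hfree _ _ hw (by simp)

/-- A connected induced subgraph with three distinct vertices contains a path with 2 edges. -/
lemma two_path_of_connected {W : Type*} {G : SimpleGraph W} {S : Set W}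
    (h : (G.induce S).Connected) {x y z : W} (hx : x ∈ S) (hy : y ∈ S) (hz : z ∈ S)
    (hxy : x ≠ y) (hxz : x ≠ z) (hyz : y ≠ z) :
    ∃ a b c : W, a ∈ S ∧ b ∈ S ∧ c ∈ S ∧ a ≠ b ∧ b ≠ c ∧ a ≠ c ∧ G.Adj a b ∧ G.Adj b c := by
  classical
  have key : ∀ (u v : S), u ≠ v → ∀ (p : (G.induce S).Walk u v), p.IsPath → 2 ≤ p.length →
      ∃ a b c : W, a ∈ S ∧ b ∈ S ∧ c ∈ S ∧ a ≠ b ∧ b ≠ c ∧ a ≠ c ∧ G.Adj a b ∧ G.Adj b c := by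
    rintro u v huv p hp hlen
    cases p with
    | nil => simp at hlen
    | cons h1 q =>
      rename_i m1
      cases q with
      | nil => simp at hlen
      | cons h2 q2 =>
        rename_i m2
        refine ⟨u, m1, m2, u.2, m1.2, m2.2, ?_, ?_, ?_, h1, h2⟩
        · exact fun hh => h1.ne (Subtype.ext hh)
        · exact fun hh => h2.ne (Subtype.ext hh)
        · rw [Walk.cons_isPath_iff] at hp
          intro hh
          apply hp.2
          rw [Walk.support_cons]
          have hum : u = m2 := Subtype.ext hh
          exact List.mem_cons_of_mem _ (hum ▸ q2.start_mem_support)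
  obtain ⟨p0⟩ := h.preconnected ⟨x, hx⟩ ⟨z, hz⟩
  obtain ⟨p, hp⟩ := p0.toPath
  have hxz' : (⟨x, hx⟩ : S) ≠ ⟨z, hz⟩ := fun hh => hxz (congrArg Subtype.val hh)
  have h1 : p.length ≠ 0 := fun hh => hxz' (Walk.eq_of_length_eq_zero hh)
  by_cases h2 : 2 ≤ p.length
  · exact key _ _ hxz' p hp h2
  · -- p has length 1, so x ~ z in G; use the third vertex y
    have hadjxz : G.Adj x z := by
      cases p with
      | nil => simp at h1
      | cons hh q =>
        have : q.length = 0 := by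
          have := congrArg id (rfl : (Walk.cons hh q).length = q.length + 1)
          simp at h2 ⊢
          omega
        have := Walk.eq_of_length_eq_zero this
        subst this
        exact hh
    obtain ⟨q0⟩ := h.preconnected ⟨y, hy⟩ ⟨x, hx⟩
    obtain ⟨q, hq⟩ := q0.toPath
    have hyx' : (⟨y, hy⟩ : S) ≠ ⟨x, hx⟩ := fun hh => hxy (congrArg Subtype.val hh).symm
    have hq1 : q.length ≠ 0 := fun hh => hyx' (Walk.eq_of_length_eq_zero hh)
    by_cases hq2 : 2 ≤ q.length
    · exact key _ _ hyx' q hq hq2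
    · have hadjyx : G.Adj y x := by
        cases q with
        | nil => simp at hq1
        | cons hh r =>
          have : r.length = 0 := by simp at hq2 ⊢; omega
          have := Walk.eq_of_length_eq_zero this
          subst this
          exact hh
      exact ⟨y, x, z, hy, hx, hz, hxy.symm, hxz, hyz, hadjyx, hadjxz⟩

/-- Boundary edge lemma. -/
lemma exists_boundary_edge {W : Type*} {G : SimpleGraph W} {P : Set W} :
    ∀ {a b : W}, G.Walk a b → a ∈ P → b ∉ P → ∃ x y, G.Adj x y ∧ x ∈ P ∧ y ∉ P := by
  intro a b w
  induction w with
  | nil => intro ha hb; exact absurd ha hb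
  | cons h q ih =>
    intro ha hb
    rename_i m _
    by_cases hm : m ∈ P
    · exact ih hm hb
    · exact ⟨_, _, h, ha, hm⟩


lemma no_internal_adj {c u w : V}
    (hcenter : ∀ x : V, ¬ IsLeaf H.T x → x = c ∨ H.T.Adj c x)
    (hu : ¬ IsLeaf H.T u) (hw : ¬ IsLeaf H.T w) (huc : u ≠ c) (hwc : w ≠ c) :
    ¬ H.T.Adj u w := by
  intro hadj
  have hcu : H.T.Adj c u := (hcenter u hu).resolve_left huc
  have hcw : H.T.Adj c w := (hcenter w hw).resolve_left hwc
  have hP1 : (Walk.cons hadj Walk.nil).IsPath := by simp [hadj.ne]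
  have hP2 : (Walk.cons hcu.symm (Walk.cons hcw Walk.nil)).IsPath := by
    have h1 : u ≠ c := huc
    have h2 : u ≠ w := hadj.ne
    have h3 : c ≠ w := hcw.ne
    simp
    tauto
  have heq : (⟨Walk.cons hadj Walk.nil, hP1⟩ : H.T.Path u w) = ⟨_, hP2⟩ :=
    H.tree_isTree.IsAcyclic.path_unique _ _
  have := congrArg (fun q : H.T.Path u w => (q : H.T.Walk u w).length) heq
  simp at this

lemma reach_delete {c u : V}
    (hcenter : ∀ x : V, ¬ IsLeaf H.T x → x = c ∨ H.T.Adj c x)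
    (hcnl : ¬ IsLeaf H.T c) (hu : ¬ IsLeaf H.T u) (huc : u ≠ c) (hcu : H.T.Adj c u) :
    {x : V | IsLeaf H.T x ∧ (H.T.deleteEdges {s(c, u)}).Reachable u x}
      = {x : V | IsLeaf H.T x ∧ H.T.Adj u x} := by
  ext x
  simp only [Set.mem_setOf_eq]
  constructor
  · rintro ⟨hlx, hreach⟩
    refine ⟨hlx, ?_⟩
    have hxu : x ≠ u := fun h => hu (h ▸ hlx)
    obtain ⟨q0⟩ := hreach.symm
    obtain ⟨q, hq⟩ := q0.toPath
    cases q with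
    | nil => exact absurd rfl hxu
    | cons h r =>
      rename_i w
      obtain ⟨hTxw, hne⟩ := (SimpleGraph.deleteEdges_adj).mp h
      have hwnl : ¬ IsLeaf H.T w := fun hl =>
        leaves_not_adj H.tree_isTree.isConnected H.card3 hlx hl hTxw
      rcases eq_or_ne w u with rfl | hwu
      · exact hTxw.symm
      · exfalso
        rcases hcenter w hwnl with hwc | hcw
        · -- w = c : contradiction with bridge property
          have hbridge : H.T.IsBridge s(c, u) :=
            (isAcyclic_iff_forall_adj_isBridge.mp H.tree_isTree.IsAcyclic) hcu
          exact hbridge (by subst hwc; exact ⟨r⟩)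
        · -- w ≠ c, adj c w: unique path w → u must pass through the deleted edge
          have hrp : r.IsPath := ((Walk.cons_isPath_iff _ _).mp hq).1
          have hr' : (r.mapLe (SimpleGraph.deleteEdges_le _)).IsPath := hrp.mapLe _
          have he : (Walk.cons hcw.symm (Walk.cons hcu Walk.nil)).IsPath := by
            have h1 : w ≠ c := fun hh => hcw.ne hh.symm
            have h2 : w ≠ u := hwu
            have h3 : c ≠ u := hcu.ne
            simp
            tauto
          have heq : (⟨r.mapLe (SimpleGraph.deleteEdges_le _), hr'⟩ : H.T.Path w u)
              = ⟨_, he⟩ := H.tree_isTree.IsAcyclic.path_unique _ _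
          have hval : r.mapLe (SimpleGraph.deleteEdges_le _)
              = Walk.cons hcw.symm (Walk.cons hcu Walk.nil) := congrArg Subtype.val heq
          have hmem : s(c, u) ∈ (r.mapLe (SimpleGraph.deleteEdges_le _)).edges := by
            rw [hval]; simp
          have hmem2 : s(c, u) ∈ r.edges := by
            rwa [edges_mapLe] at hmem
          have := r.edges_subset_edgeSet hmem2
          rw [SimpleGraph.edgeSet_deleteEdges] at this
          simp at this
  · rintro ⟨hlx, hadj⟩
    refine ⟨hlx, ?_⟩
    have : (H.T.deleteEdges {s(c, u)}).Adj u x := by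
      rw [SimpleGraph.deleteEdges_adj]
      refine ⟨hadj, ?_⟩
      simp only [Set.mem_singleton_iff, Sym2.eq, Sym2.rel_iff']
      rintro (⟨rfl, -⟩ | ⟨rfl, rfl⟩)
      · exact huc rfl
      · exact hcnl hlx
    exact this.reachable

lemma leaf_nbrs (hfree : C4Free H.graph) {c u : V}
    (hcenter : ∀ x : V, ¬ IsLeaf H.T x → x = c ∨ H.T.Adj c x)
    (hcnl : ¬ IsLeaf H.T c) (hu : ¬ IsLeaf H.T u) (huc : u ≠ c) :
    ∃ x y : V, x ≠ y ∧ ∀ z : V, (IsLeaf H.T z ∧ H.T.Adj u z) ↔ z = x ∨ z = y := by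
  have hcu : H.T.Adj c u := (hcenter u hu).resolve_left huc
  set L : Set V := {z : V | IsLeaf H.T z ∧ H.T.Adj u z} with hL
  have hsub : H.T.neighborSet u ⊆ insert c L := by
    intro w hw
    have hadj : H.T.Adj u w := hw
    by_cases hlw : IsLeaf H.T w
    · exact Set.mem_insert_of_mem _ ⟨hlw, hadj⟩
    · rcases eq_or_ne w c with rfl | hwc
      · exact Set.mem_insert _ _
      · exact absurd hadj (no_internal_adj H hcenter hu hlw huc hwc)
  have hdeg : 3 ≤ (H.T.neighborSet u).ncard := H.nonleaf_degree u hu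
  have hcard : 2 ≤ L.ncard := by
    have h1 := Set.ncard_le_ncard hsub (Set.toFinite _)
    have h2 := Set.ncard_insert_le c L
    omega
  obtain ⟨x, hx, y, hy, hxy⟩ := (Set.one_lt_ncard (Set.toFinite L)).mp (by omega)
  refine ⟨x, y, hxy, fun z => ?_⟩
  constructor
  · intro hz
    by_contra hor
    push_neg at hor
    obtain ⟨hzx, hzy⟩ := hor
    -- three distinct leaf neighbours: contradiction with C4-freeness
    have hplanar := H.planar u c hcu.symm
    rw [show s(u, c) = s(c, u) from Sym2.eq_swap] at hplanar
    rw [reach_delete H hcenter hcnl hu huc hcu] at hplanar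
    obtain ⟨a, b, d, ha, hb, hd, hab, hbd, had, hCab, hCbd⟩ :=
      two_path_of_connected hplanar hx hy (show z ∈ L from hz)
        hxy (fun h => hzx h.symm) (fun h => hzy h.symm)
    have hTa : H.T.Adj u a := ha.2
    have hTd : H.T.Adj u d := hd.2
    refine c4_of_square hfree (Or.inl hTa : H.graph.Adj u a) (Or.inr hCab)
      (Or.inr hCbd) (Or.inl hTd.symm) ?_ ?_
    · exact fun h => hu (h ▸ hb.1)
    · exact fun h => had (h ▸ rfl) |>.elim
  · rintro (rfl | rfl)
    · exact hx
    · exact hy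

lemma center_no_leaf (hfree : C4Free H.graph) {c v0 v1 : V}
    (hcenter : ∀ x : V, ¬ IsLeaf H.T x → x = c ∨ H.T.Adj c x)
    (hcnl : ¬ IsLeaf H.T c) (hl0 : IsLeaf H.T v0) (hn0 : H.T.neighborSet v0 = {v1})
    (h1c : v1 ≠ c) : ∀ x : V, IsLeaf H.T x → ¬ H.T.Adj c x := by
  intro x hlx hadj
  set Z : Set V := {z : V | IsLeaf H.T z ∧ H.T.Adj c z} with hZ
  have hxZ : x ∈ Z := ⟨hlx, hadj⟩
  have h0Z : v0 ∉ Z := by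
    rintro ⟨-, hc0⟩
    have : c ∈ H.T.neighborSet v0 := hc0.symm
    rw [hn0] at this
    exact h1c this.symm
  have hxS : x ∈ H.C.support := by rw [H.support_C]; exact hlx
  have h0S : v0 ∈ H.C.support := by rw [H.support_C]; exact hl0
  obtain ⟨W⟩ := H.cycle_connected.preconnected ⟨x, hxS⟩ ⟨v0, h0S⟩
  obtain ⟨za, yb, hadj', hza', hyb'⟩ :=
    exists_boundary_edge (P := Subtype.val ⁻¹' Z) W hxZ h0Z
  obtain ⟨z, hzS⟩ := za
  obtain ⟨y, hyS⟩ := yb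
  have hza : z ∈ Z := hza'
  have hyb : y ∉ Z := hyb'
  have hCzy : H.C.Adj z y := hadj'
  have hly : IsLeaf H.T y := by
    have h := hyS
    rw [H.support_C] at h
    exact h
  obtain ⟨w, hw⟩ := leaf_iff.mp hly
  have hyw : H.T.Adj y w := by
    have : w ∈ H.T.neighborSet y := by rw [hw]; rfl
    exact this
  have hwnl : ¬ IsLeaf H.T w := fun hl =>
    leaves_not_adj H.tree_isTree.isConnected H.card3 hly hl hyw
  have hwc : w ≠ c := by
    rintro rfl
    exact hyb ⟨hly, hyw.symm⟩
  have hcw : H.T.Adj c w := (hcenter w hwnl).resolve_left hwc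
  have hcz : H.T.Adj c z := hza.2
  refine c4_of_square hfree (Or.inl hcz : H.graph.Adj c z) (Or.inr hCzy)
    (Or.inl hyw) (Or.inl hcw.symm) ?_ ?_
  · exact fun h => hcnl (h ▸ hly)
  · exact fun h => hwnl (h ▸ hza.1)

lemma walk_len4 {G : SimpleGraph V} {a b : V} (p : G.Walk a b) (hp : p.IsPath)
    (hlen : p.length = 4) :
    ∃ v1 v2 v3 : V, ∃ (_ : G.Adj a v1) (_ : G.Adj v1 v2) (_ : G.Adj v2 v3) (_ : G.Adj v3 b),
      ([a, v1, v2, v3, b] : List V).Nodup := by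
  cases p with
  | nil => simp at hlen
  | cons h1 q =>
    rename_i w1
    cases q with
    | nil => simp at hlen
    | cons h2 q =>
      rename_i w2
      cases q with
      | nil => simp at hlen
      | cons h3 q =>
        rename_i w3
        cases q with
        | nil => simp at hlen
        | cons h4 q =>
          rename_i w4
          have hq0 : q.length = 0 := by simp only [Walk.length_cons] at hlen; omega
          have := Walk.eq_of_length_eq_zero hq0
          subst this
          cases q with
          | nil =>
            refine ⟨w1, w2, w3, h1, h2, h3, h4, ?_⟩
            have := hp.support_nodup
            simpa using this
          | cons h q => simp at hq0

end Halin

/-- If every longest path of the characteristic tree of an `n`-vertex `C₄`-free Halin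
graph has length exactly `4`, then `3 ∣ n - 1` and the graph has `5(n-1)/3` edges. -/
theorem longest_path_four {V : Type*} [Fintype V] (H : HalinGraph V)
    (hfree : C4Free H.graph)
    (hex : ∃ (a b : V) (p : H.T.Walk a b), p.IsPath ∧ p.length = 4)
    (hmax : ∀ (a b : V) (p : H.T.Walk a b), p.IsPath → p.length ≤ 4) :
    3 ∣ (Fintype.card V - 1) ∧ eCount H.graph = 5 * (Fintype.card V - 1) / 3 := by
  classical
  obtain ⟨a, b, p, hp, hlen⟩ := hex
  obtain ⟨v1, v2, v3, h01, h12, h23, h34, hnd⟩ := walk_len4 p hp hlen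
  have hl0 : IsLeaf H.T a := start_leaf H hmax p hp hlen
  have hn0 : H.T.neighborSet a = {v1} := leaf_adj hl0 h01
  have hcenter := center_structure H hmax h01 h12 h23 h34 hnd
  have hnd' := hnd
  simp only [List.nodup_cons, List.mem_cons, List.not_mem_nil, or_false, not_or,
    List.nodup_nil, and_true] at hnd'
  obtain ⟨⟨hn01, hn02, hn03, hn04⟩, ⟨hn12, hn13, hn14⟩, ⟨hn23, hn24⟩, hn34, -⟩ := hnd'
  have hcnl : ¬ IsLeaf H.T v2 := not_leaf_of_two h12.symm h23 hn13
  have hnoc : ∀ x, IsLeaf H.T x → ¬ H.T.Adj v2 x :=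
    center_no_leaf H hfree hcenter hcnl hl0 hn0 hn12
  -- the parent of each leaf
  set P : V → V := fun x => if h : ∃ w, H.T.neighborSet x = {w} then h.choose else x with hP
  have hPleaf : ∀ x, IsLeaf H.T x → H.T.neighborSet x = {P x} := by
    intro x hx
    have h := leaf_iff.mp hx
    rw [hP]
    simp only
    rw [dif_pos h]
    exact h.choose_spec
  have hPadj : ∀ x, IsLeaf H.T x → H.T.Adj x (P x) := fun x hx => by
    have : P x ∈ H.T.neighborSet x := by rw [hPleaf x hx]; rfl
    exact this
  have hPnl : ∀ x, IsLeaf H.T x → ¬ IsLeaf H.T (P x) := fun x hx hl =>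
    leaves_not_adj H.tree_isTree.isConnected H.card3 hx hl (hPadj x hx)
  have hPne : ∀ x, IsLeaf H.T x → P x ≠ v2 := fun x hx h =>
    hnoc x hx (h ▸ (hPadj x hx).symm)
  have hPeq : ∀ x u, IsLeaf H.T x → (H.T.Adj u x ↔ P x = u) := by
    intro x u hx
    constructor
    · intro h
      have : u ∈ H.T.neighborSet x := h.symm
      rw [hPleaf x hx] at this
      exact this.symm
    · intro h
      exact (h ▸ (hPadj x hx)).symm
  -- vertex counting
  set Lf : Finset V := Finset.univ.filter (fun v => IsLeaf H.T v) with hLf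
  set Nf : Finset V := Finset.univ.filter (fun v => ¬ IsLeaf H.T v) with hNf
  set If : Finset V := Nf.erase v2 with hIf
  clear_value Lf Nf If
  have hv2N : v2 ∈ Nf := by simp [hNf, hcnl]
  have hsplit : Lf.card + Nf.card = Fintype.card V := by
    rw [hLf, hNf, ← Finset.card_univ]
    exact Finset.card_filter_add_card_filter_not _
  have hNpos : 1 ≤ Nf.card := Finset.card_pos.mpr ⟨v2, hv2N⟩
  have hNcard : Nf.card = If.card + 1 := by
    rw [hIf, Finset.card_erase_of_mem hv2N]
    omega
  have hfiber : ∀ u ∈ If, (Lf.filter (fun x => P x = u)).card = 2 := by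
    intro u hu
    have huI : ¬ IsLeaf H.T u ∧ u ≠ v2 := by
      rw [hIf, Finset.mem_erase, hNf] at hu
      simp at hu
      tauto
    obtain ⟨x, y, hxy, hiff⟩ := leaf_nbrs H hfree hcenter hcnl huI.1 huI.2
    have hset : Lf.filter (fun x => P x = u) = {x, y} := by
      ext z
      simp only [hLf, Finset.mem_filter, Finset.mem_univ, true_and, Finset.mem_insert,
        Finset.mem_singleton]
      constructor
      · rintro ⟨hz, hpz⟩
        exact (hiff z).mp ⟨hz, (hPeq z u hz).mpr hpz⟩
      · intro h
        have hz := (hiff z).mpr h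
        exact ⟨hz.1, (hPeq z u hz.1).mp hz.2⟩
    rw [hset, Finset.card_insert_of_notMem (by simp [hxy]), Finset.card_singleton]
  have hmapsto : ∀ x ∈ Lf, P x ∈ If := by
    intro x hx
    rw [hLf] at hx
    simp only [Finset.mem_filter, Finset.mem_univ, true_and] at hx
    rw [hIf, Finset.mem_erase]
    exact ⟨hPne x hx, by simp [hNf, hPnl x hx]⟩
  have hLcard : Lf.card = 2 * If.card := by
    rw [Finset.card_eq_sum_card_fiberwise hmapsto,
      Finset.sum_congr rfl (fun u hu => hfiber u hu), Finset.sum_const, smul_eq_mul]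
    ring
  -- edge counting
  have heT : eCount H.T = Fintype.card V - 1 := by
    have h := H.tree_isTree.card_edgeFinset
    rw [eCount_eq_card_edgeFinset]
    omega
  have hdegC : ∀ v, IsLeaf H.T v → H.C.degree v = 2 := by
    intro v hv
    have hvS : v ∈ H.C.support := by rw [H.support_C]; exact hv
    have h2 := H.two_regular v hvS
    rw [ncDeg, Set.ncard_eq_toFinset_card', Set.toFinset_card] at h2
    rw [← SimpleGraph.card_neighborSet_eq_degree]
    exact h2
  have hdegC0 : ∀ v, ¬ IsLeaf H.T v → H.C.degree v = 0 := by
    intro v hv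
    rw [SimpleGraph.degree, Finset.card_eq_zero]
    ext w
    simp only [SimpleGraph.mem_neighborFinset, Finset.notMem_empty, iff_false]
    intro hadj
    have : v ∈ H.C.support := ⟨w, hadj⟩
    rw [H.support_C] at this
    exact hv this
  have hsum : ∑ v, H.C.degree v = 2 * Lf.card := by
    rw [← Finset.sum_filter_add_sum_filter_not Finset.univ (fun v => IsLeaf H.T v)]
    have e1 : ∑ v ∈ Finset.univ.filter (fun v => IsLeaf H.T v), H.C.degree v = 2 * Lf.card := by
      rw [Finset.sum_congr rfl (fun v hv => hdegC v (Finset.mem_filter.mp hv).2),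
        Finset.sum_const, smul_eq_mul, hLf]
      ring
    have e2 : ∑ v ∈ Finset.univ.filter (fun v => ¬ IsLeaf H.T v), H.C.degree v = 0 := by
      rw [Finset.sum_congr rfl (fun v hv => hdegC0 v (Finset.mem_filter.mp hv).2)]
      simp
    rw [e1, e2]
    exact add_zero _
  have heC : eCount H.C = Lf.card := by
    have key := H.C.sum_degrees_eq_twice_card_edges
    rw [hsum] at key
    rw [eCount_eq_card_edgeFinset]
    omega
  have hdisj : Disjoint H.T.edgeSet H.C.edgeSet := by
    rw [Set.disjoint_left]
    intro e heT' heC'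
    induction e using Sym2.ind with
    | _ x y =>
      rw [SimpleGraph.mem_edgeSet] at heT' heC'
      have hxS : x ∈ H.C.support := ⟨y, heC'⟩
      have hyS : y ∈ H.C.support := ⟨x, heC'.symm⟩
      rw [H.support_C] at hxS hyS
      exact leaves_not_adj H.tree_isTree.isConnected H.card3 hxS hyS heT'
  have hgraph : eCount H.graph = eCount H.T + eCount H.C := by
    rw [eCount, HalinGraph.graph, SimpleGraph.edgeSet_sup,
      Set.ncard_union_eq hdisj (Set.toFinite _) (Set.toFinite _)]
    rfl
  have hcardV : Fintype.card V = 3 * If.card + 1 := by omega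
  constructor
  · exact ⟨If.card, by omega⟩
  · rw [hgraph, heT, heC]
    omega
end

section
/- Every 16-vertex C4-free Halin graph H satisfies e(H) ≤ 25. -/
open SimpleGraph

namespace HalinAux

variable {V : Type*}

lemma walk_closed {G : SimpleGraph V} (S : Set V)
    (hS : ∀ a b, a ∈ S → G.Adj a b → b ∈ S) :
    ∀ {a b : V} (_w : G.Walk a b), a ∈ S → b ∈ S := by
  intro a b w
  induction w with
  | nil => exact id
  | cons h _ ih => exact fun ha => ih (hS _ _ ha h)

lemma leaf_nbr {G : SimpleGraph V} {x : V} (h : IsLeaf G x) :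
    ∃ v, G.neighborSet x = {v} := Set.ncard_eq_one.mp h

lemma nbr_eq {G : SimpleGraph V} {x v w : V} (h : G.neighborSet x = {v})
    (hw : G.Adj x w) : w = v := by
  have : w ∈ G.neighborSet x := hw
  rw [h] at this
  exact this

lemma no_leaf_leaf {G : SimpleGraph V} [Fintype V] (hconn : G.Connected)
    (hcard : 3 ≤ Fintype.card V)
    {x y : V} (hx : IsLeaf G x) (hy : IsLeaf G y) (hadj : G.Adj x y) : False := by
  classical
  obtain ⟨nx, hnx⟩ := leaf_nbr hx
  obtain ⟨ny, hny⟩ := leaf_nbr hy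
  have hnxy : nx = y := (nbr_eq hnx hadj).symm
  have hnyx : ny = x := (nbr_eq hny hadj.symm).symm
  have hex : ∃ w : V, w ≠ x ∧ w ≠ y := by
    by_contra hc
    push_neg at hc
    have hsub : (Finset.univ : Finset V) ⊆ {x, y} := by
      intro w _
      by_cases h : w = x
      · simp [h]
      · simp [hc w h]
    have := Finset.card_le_card hsub
    have h2 : ({x, y} : Finset V).card ≤ 2 := Finset.card_insert_le _ _ |>.trans (by simp)
    rw [Finset.card_univ] at this
    omega
  obtain ⟨w, hwx, hwy⟩ := hex
  have hcl : ∀ a b, a ∈ ({x, y} : Set V) → G.Adj a b → b ∈ ({x, y} : Set V) := by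
    intro a b ha hab
    rcases ha with rfl | rfl
    · have := nbr_eq hnx hab; right; rw [this, hnxy]; exact Set.mem_singleton _
    · have := nbr_eq hny hab; left; rw [this, hnyx]
  have hw : w ∈ ({x, y} : Set V) :=
    walk_closed _ hcl (hconn.preconnected x w).some (by left; rfl)
  rcases hw with h | h
  · exact hwx h
  · exact hwy h

lemma c4_absurd {G : SimpleGraph V} {a b c d : V}
    (h1 : G.Adj a b) (h2 : G.Adj b c) (h3 : G.Adj c d) (h4 : G.Adj d a)
    (hac : a ≠ c) (hbd : b ≠ d) (hfree : C4Free G) : False := by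
  classical
  let w : G.Walk a a :=
    Walk.cons h1 (Walk.cons h2 (Walk.cons h3 (Walk.cons h4 Walk.nil)))
  have hab := h1.ne
  have hbc := h2.ne
  have hcd := h3.ne
  have hda := h4.ne
  have hcyc : w.IsCycle := by
    rw [Walk.isCycle_def]
    refine ⟨?_, by simp [w], ?_⟩
    · rw [Walk.isTrail_def]
      simp only [w, Walk.edges_cons, Walk.edges_nil, List.nodup_cons, List.mem_cons,
        List.not_mem_nil, or_false, List.mem_singleton, List.nodup_nil, and_true]
      refine ⟨?_, ?_, ?_⟩ <;> simp [Sym2.eq_iff] <;> tauto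
    · simp only [w, Walk.support_cons, Walk.support_nil, List.tail_cons, List.nodup_cons,
        List.mem_cons, List.not_mem_nil, or_false, List.mem_singleton, List.nodup_nil, and_true]
      tauto
  exact hfree a w hcyc (by simp [w])

end HalinAux
namespace HalinAux

variable {V : Type*}

lemma tree_bridge {G : SimpleGraph V} (ht : G.IsAcyclic) {u v : V} (h : G.Adj u v) :
    ¬ (G.deleteEdges {s(u, v)}).Reachable u v := by
  have hb : G.IsBridge s(u, v) := isAcyclic_iff_forall_adj_isBridge.mp ht h
  exact isBridge_iff.mp hb

lemma del_adj {G : SimpleGraph V} {u v a b : V} (hab : G.Adj a b)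
    (hne : s(a, b) ≠ s(u, v)) : (G.deleteEdges {s(u, v)}).Adj a b := by
  rw [deleteEdges_adj]
  exact ⟨hab, by simpa using hne⟩

lemma side_dichotomy {G : SimpleGraph V} (hconn : G.Connected) {u v : V} (w : V) :
    (G.deleteEdges {s(u, v)}).Reachable u w ∨ (G.deleteEdges {s(u, v)}).Reachable v w := by
  classical
  have main : ∀ (a b : V) (_q : G.Walk a b),
      ((G.deleteEdges {s(u, v)}).Reachable u a ∨ (G.deleteEdges {s(u, v)}).Reachable v a) →
      ((G.deleteEdges {s(u, v)}).Reachable u b ∨ (G.deleteEdges {s(u, v)}).Reachable v b) := by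
    intro a b q
    induction q with
    | nil => exact id
    | @cons a c b h q ih =>
      intro ha
      apply ih
      by_cases he : s(a, c) = s(u, v)
      · rcases Sym2.eq_iff.mp he with ⟨rfl, rfl⟩ | ⟨rfl, rfl⟩
        · exact Or.inr (Reachable.refl _)
        · exact Or.inl (Reachable.refl _)
      · have hadj := del_adj h he
        rcases ha with hr | hr
        · exact Or.inl (hr.trans hadj.reachable)
        · exact Or.inr (hr.trans hadj.reachable)
  exact main u w ((hconn.preconnected u w).some) (Or.inl (Reachable.refl _))

lemma connected_card_le {W : Type*} [Fintype W] [DecidableEq W] {G : SimpleGraph W}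
    [DecidableRel G.Adj] (h : G.Connected) :
    Fintype.card W ≤ G.edgeFinset.card + 1 := by
  obtain ⟨r⟩ := h.nonempty
  have step : ∀ v : W, ∃ w, v ≠ r → G.Adj v w ∧ G.dist w r < G.dist v r := by
    intro v
    by_cases hv : v = r
    · exact ⟨r, fun hc => absurd hv hc⟩
    · obtain ⟨p, hp⟩ := h.exists_walk_length_eq_dist v r
      obtain ⟨w, h', q, rfl⟩ := Walk.exists_eq_cons_of_ne hv p
      refine ⟨w, fun _ => ⟨h', ?_⟩⟩
      have h1 : G.dist w r ≤ q.length := SimpleGraph.dist_le q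
      rw [Walk.length_cons] at hp
      have h2 : 0 < G.dist v r := h.pos_dist_of_ne hv
      omega
  choose f hf using step
  have hcna : Fintype.card W - 1 ≤ G.edgeFinset.card := by
    have := Finset.card_le_card_of_injOn (fun v => s(v, f v))
      (s := Finset.univ.erase r) (t := G.edgeFinset) ?_ ?_
    · rwa [Finset.card_erase_of_mem (Finset.mem_univ r), Finset.card_univ] at this
    · intro v hv
      simp only [Finset.mem_coe, SimpleGraph.mem_edgeFinset, SimpleGraph.mem_edgeSet]
      exact (hf v (Finset.ne_of_mem_erase hv)).1
    · intro v1 h1 v2 h2 heq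
      simp only [Sym2.eq_iff] at heq
      rcases heq with ⟨h, _⟩ | ⟨ha, hb⟩
      · exact h
      · exfalso
        have d1 := (hf v1 (Finset.ne_of_mem_erase h1)).2
        have d2 := (hf v2 (Finset.ne_of_mem_erase h2)).2
        rw [hb] at d1
        rw [← ha] at d2
        omega
  have : 0 < Fintype.card W := Fintype.card_pos_iff.mpr ⟨r⟩
  omega

end HalinAux
namespace HalinAux

variable {V : Type*}

open Finset in
lemma cut_le_two [Fintype V] [DecidableEq V] (C : SimpleGraph V) [DecidableRel C.Adj]
    (S : Set V) [DecidablePred (· ∈ S)]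
    (hdeg : ∀ x ∈ S, C.degree x = 2)
    (hconn : (C.induce S).Connected) :
    (Finset.univ.filter (fun q : V × V => q.1 ∈ S ∧ q.2 ∉ S ∧ C.Adj q.1 q.2)).card ≤ 2 := by
  haveI : DecidableRel (C.induce S).Adj := fun a b =>
    inferInstanceAs (Decidable (C.Adj a b))
  set m := (C.induce S).edgeFinset.card with hm
  have hhs : ∑ v : ↥S, (C.induce S).degree v = 2 * m :=
    SimpleGraph.sum_degrees_eq_twice_card_edges _
  have hdeg_in : ∀ x : ↥S,
      (C.induce S).degree x = (S.toFinset.filter (fun y => C.Adj ↑x y)).card := by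
    intro x
    rw [SimpleGraph.degree]
    apply Finset.card_bij (fun (y : ↥S) _ => (y : V))
    · intro y hy
      rw [SimpleGraph.mem_neighborFinset] at hy
      simp only [Finset.mem_filter, Set.mem_toFinset]
      exact ⟨y.2, hy⟩
    · intro y1 _ y2 _ h
      exact Subtype.ext h
    · intro y hy
      simp only [Finset.mem_filter, Set.mem_toFinset] at hy
      exact ⟨⟨y, hy.1⟩, by rw [SimpleGraph.mem_neighborFinset]; exact hy.2, rfl⟩
  have hsum_in : ∑ x ∈ S.toFinset, (S.toFinset.filter (fun y => C.Adj x y)).card = 2 * m := by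
    rw [← hhs]
    rw [Finset.sum_subtype S.toFinset (fun x => Set.mem_toFinset)
      (fun x => (S.toFinset.filter (fun y => C.Adj x y)).card)]
    exact Finset.sum_congr rfl (fun x _ => (hdeg_in x).symm)
  have hsplit : ∀ x ∈ S.toFinset,
      (S.toFinset.filter (fun y => C.Adj x y)).card
        + (Finset.univ.filter (fun y => y ∉ S ∧ C.Adj x y)).card = 2 := by
    intro x hx
    rw [Set.mem_toFinset] at hx
    have h2 : (Finset.univ.filter (fun y => C.Adj x y)).card = 2 := by
      have : Finset.univ.filter (fun y => C.Adj x y) = C.neighborFinset x := by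
        ext y; simp [SimpleGraph.mem_neighborFinset]
      rw [this]
      exact hdeg x hx
    rw [← h2]
    have e1 : S.toFinset.filter (fun y => C.Adj x y)
        = (Finset.univ.filter (fun y => C.Adj x y)).filter (fun y => y ∈ S) := by
      ext y; simp [Set.mem_toFinset]; tauto
    have e2 : Finset.univ.filter (fun y => y ∉ S ∧ C.Adj x y)
        = (Finset.univ.filter (fun y => C.Adj x y)).filter (fun y => y ∉ S) := by
      ext y; simp; tauto
    rw [e1, e2]
    exact Finset.card_filter_add_card_filter_not (fun y => y ∈ S)
  have hfw : (Finset.univ.filter (fun q : V × V => q.1 ∈ S ∧ q.2 ∉ S ∧ C.Adj q.1 q.2)).card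
      = ∑ x ∈ S.toFinset, (Finset.univ.filter (fun y => y ∉ S ∧ C.Adj x y)).card := by
    rw [Finset.card_eq_sum_card_fiberwise
      (f := Prod.fst) (t := S.toFinset) ?_]
    · apply Finset.sum_congr rfl
      intro x hx_mem0
      have hx_mem : x ∈ S := Set.mem_toFinset.mp hx_mem0
      apply Finset.card_bij (fun (q : V × V) _ => q.2)
      · intro q hq
        simp only [Finset.mem_filter, Finset.mem_univ, true_and] at hq ⊢
        obtain ⟨⟨_, h2, h3⟩, h4⟩ := hq
        rw [h4] at h3
        exact ⟨h2, h3⟩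
      · intro q1 hq1 q2 hq2 h
        simp only [Finset.mem_filter] at hq1 hq2
        exact Prod.ext (hq1.2.trans hq2.2.symm) h
      · intro y hy
        simp only [Finset.mem_filter, Finset.mem_univ, true_and] at hy ⊢
        exact ⟨(x, y), ⟨⟨hx_mem, hy.1, by simpa using hy.2⟩, rfl⟩, rfl⟩
    · intro q hq
      simp only [Finset.mem_coe, Finset.mem_filter, Finset.mem_univ, true_and] at hq
      rw [Finset.mem_coe, Set.mem_toFinset]
      exact hq.1
  have htot : ∑ x ∈ S.toFinset, ((S.toFinset.filter (fun y => C.Adj x y)).card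
      + (Finset.univ.filter (fun y => y ∉ S ∧ C.Adj x y)).card) = 2 * S.toFinset.card := by
    rw [Finset.sum_congr rfl hsplit]
    simp [Finset.sum_const, mul_comm]
  rw [Finset.sum_add_distrib, hsum_in] at htot
  have hcle : Fintype.card ↥S ≤ m + 1 := connected_card_le hconn
  have hnn : S.toFinset.card = Fintype.card ↥S := Set.toFinset_card S
  omega

end HalinAux

namespace HalinAux

variable {V : Type*}

open Classical in
noncomputable def par (T : SimpleGraph V) (x : V) : V :=
  if h : ∃ v, T.neighborSet x = {v} then h.choose else x

lemma par_spec {T : SimpleGraph V} {x : V} (h : IsLeaf T x) :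
    T.neighborSet x = {par T x} := by
  have hex : ∃ v, T.neighborSet x = {v} := leaf_nbr h
  simp only [par, dif_pos hex]
  exact hex.choose_spec

lemma adj_par {T : SimpleGraph V} {x : V} (h : IsLeaf T x) : T.Adj x (par T x) := by
  have : par T x ∈ T.neighborSet x := by rw [par_spec h]; exact Set.mem_singleton _
  exact this

lemma eq_par {T : SimpleGraph V} {x w : V} (h : IsLeaf T x) (hadj : T.Adj x w) :
    w = par T x := nbr_eq (par_spec h) hadj

lemma par_not_leaf {T : SimpleGraph V} [Fintype V] (hconn : T.Connected)
    (hcard : 3 ≤ Fintype.card V) {x : V} (h : IsLeaf T x) : ¬ IsLeaf T (par T x) :=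
  fun hl => no_leaf_leaf hconn hcard h hl (adj_par h)

lemma par_ne {T : SimpleGraph V} [Fintype V] (hconn : T.Connected)
    (hcard : 3 ≤ Fintype.card V) {x y : V} (hx : IsLeaf T x) (hy : IsLeaf T y) :
    x ≠ par T y := fun h => (par_not_leaf hconn hcard hy) (h ▸ hx)

section Halin

variable [Fintype V] (T C : SimpleGraph V)
variable (htree : T.IsTree) (hcard3 : 3 ≤ Fintype.card V)
variable (hsupp : C.support = {v : V | IsLeaf T v})
variable (h2reg : ∀ v ∈ C.support, ncDeg C v = 2)
variable (hfree : C4Free (T ⊔ C))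

include hsupp in
lemma leaf_of_Cadj {x y : V} (h : C.Adj x y) : IsLeaf T x ∧ IsLeaf T y := by
  constructor
  · have : x ∈ C.support := ⟨y, h⟩
    rwa [hsupp] at this
  · have : y ∈ C.support := ⟨x, h.symm⟩
    rwa [hsupp] at this

include hsupp h2reg in
lemma C_two_nbrs {x : V} (h : IsLeaf T x) :
    ∃ y z : V, y ≠ z ∧ C.neighborSet x = {y, z} := by
  have hx : x ∈ C.support := by rw [hsupp]; exact h
  have := h2reg x hx
  obtain ⟨y, z, hyz, hset⟩ := Set.ncard_eq_two.mp this
  exact ⟨y, z, hyz, hset⟩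

include htree hcard3 hsupp h2reg hfree in
lemma exists_good_nbr {x : V} (h : IsLeaf T x) :
    ∃ y, C.Adj x y ∧ par T y ≠ par T x := by
  obtain ⟨y, z, hyz, hset⟩ := C_two_nbrs T C hsupp h2reg h
  have hy : C.Adj x y := by
    have : y ∈ C.neighborSet x := by rw [hset]; exact Set.mem_insert _ _
    exact this
  have hz : C.Adj x z := by
    have : z ∈ C.neighborSet x := by rw [hset]; exact Set.mem_insert_of_mem _ rfl
    exact this
  by_contra hc
  push_neg at hc
  have hyp := hc y hy
  have hzp := hc z hz
  -- both neighbours have the same parent as x; build a C4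
  have hly : IsLeaf T y := (leaf_of_Cadj T C hsupp hy).2
  have hlz : IsLeaf T z := (leaf_of_Cadj T C hsupp hz).2
  set v := par T x with hv
  have havy : T.Adj v y := by
    have := adj_par hly
    rw [hyp] at this
    exact this.symm
  have havz : T.Adj z v := by
    have := adj_par hlz
    rwa [hzp] at this
  have hvl : ¬ IsLeaf T v := par_not_leaf htree.isConnected hcard3 h
  refine c4_absurd (G := T ⊔ C) (a := v) (b := y) (c := x) (d := z)
    (Or.inl havy) (Or.inr hy.symm) (Or.inr hz) (Or.inl havz) ?_ hyz hfree
  exact fun hvx => hvl (hvx ▸ h)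

include htree hcard3 hsupp hfree in
lemma pars_not_adj {x y : V} (hadj : C.Adj x y) :
    ¬ T.Adj (par T x) (par T y) := by
  intro hTadj
  obtain ⟨hlx, hly⟩ := leaf_of_Cadj T C hsupp hadj
  refine c4_absurd (G := T ⊔ C) (a := x) (b := y) (c := par T y) (d := par T x)
    (Or.inr hadj) (Or.inl (adj_par hly)) (Or.inl hTadj.symm) (Or.inl (adj_par hlx).symm)
    ?_ ?_ hfree
  · exact par_ne htree.isConnected hcard3 hlx hly
  · exact fun h => (par_ne htree.isConnected hcard3 hly hlx) h

end Halin

end HalinAux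

namespace HalinAux

variable {V : Type*}

section Halin2

variable [Fintype V] {T C : SimpleGraph V}
variable (htree : T.IsTree) (hcard3 : 3 ≤ Fintype.card V)
variable (hsupp : C.support = {v : V | IsLeaf T v})
variable (hfree : C4Free (T ⊔ C))

include htree hcard3 hsupp hfree in
/-- For a `C`-edge `xy` whose endpoints have distinct parents, there is a non-leaf
vertex `a` adjacent to `par T x` such that the tree edge `(par T x, a)` separates
`x` from `y`. -/
lemma sep_edge_exists {x y : V} (hadj : C.Adj x y) (hne : par T x ≠ par T y) :
    ∃ a : V, ¬ IsLeaf T a ∧ T.Adj (par T x) a ∧ a ≠ par T x ∧ a ≠ par T y ∧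
      ¬ (T.deleteEdges {s(par T x, a)}).Reachable x y := by
  obtain ⟨hlx, hly⟩ := leaf_of_Cadj T C hsupp hadj
  have hnadj : ¬ T.Adj (par T x) (par T y) := pars_not_adj T C htree hcard3 hsupp hfree hadj
  have hplx : ¬ IsLeaf T (par T x) := par_not_leaf htree.isConnected hcard3 hlx
  have hply : ¬ IsLeaf T (par T y) := par_not_leaf htree.isConnected hcard3 hly
  obtain ⟨P, hP, -⟩ := htree.existsUnique_path (par T x) (par T y)
  obtain ⟨a, hpa, q, rfl⟩ := SimpleGraph.Walk.exists_eq_cons_of_ne hne P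
  rw [SimpleGraph.Walk.cons_isPath_iff] at hP
  obtain ⟨hq, hpxq⟩ := hP
  have hay : a ≠ par T y := by
    rintro rfl
    have : q = SimpleGraph.Walk.nil := SimpleGraph.Walk.isPath_iff_eq_nil.mp hq
    exact hnadj hpa
  have hanl : ¬ IsLeaf T a := by
    intro hla
    have hpar_a : par T x = par T a := eq_par hla hpa.symm
    obtain ⟨c, hac, q2, rfl⟩ := SimpleGraph.Walk.exists_eq_cons_of_ne hay q
    have hcpx : c = par T x := by rw [hpar_a]; exact eq_par hla hac
    apply hpxq
    rw [SimpleGraph.Walk.support_cons]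
    right
    rw [← hcpx]
    exact SimpleGraph.Walk.start_mem_support q2
  refine ⟨a, hanl, hpa, fun h => hpa.ne h.symm, hay, ?_⟩
  intro hreach
  set e : Sym2 V := s(par T x, a) with he
  have h1 : (T.deleteEdges {e}).Adj (par T x) x := by
    apply del_adj (adj_par hlx).symm
    intro hc
    rcases Sym2.eq_iff.mp hc with ⟨-, h2⟩ | ⟨-, h2⟩
    · exact hanl (by rw [← h2]; exact hlx)
    · exact hplx (by rw [← h2]; exact hlx)
  have h2 : (T.deleteEdges {e}).Adj y (par T y) := by
    apply del_adj (adj_par hly)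
    intro hc
    rcases Sym2.eq_iff.mp hc with ⟨h1, -⟩ | ⟨h1, -⟩
    · exact hplx (by rw [← h1]; exact hly)
    · exact hanl (by rw [← h1]; exact hly)
  have h3 : (T.deleteEdges {e}).Reachable a (par T y) := by
    refine ⟨q.transfer _ ?_⟩
    intro f hf
    rw [SimpleGraph.edgeSet_deleteEdges]
    refine ⟨q.edges_subset_edgeSet hf, ?_⟩
    intro hfe
    rw [Set.mem_singleton_iff] at hfe
    subst hfe
    exact hpxq (q.fst_mem_support_of_mem_edges hf)
  have : (T.deleteEdges {e}).Reachable (par T x) a :=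
    ((h1.reachable.trans hreach).trans h2.reachable).trans h3.symm
  exact tree_bridge htree.IsAcyclic hpa this

include htree in
lemma sides_exclusive {u v : V} (huv : T.Adj u v) {x : V}
    (hx : (T.deleteEdges {s(u, v)}).Reachable u x)
    (hx' : (T.deleteEdges {s(u, v)}).Reachable v x) : False :=
  tree_bridge htree.IsAcyclic huv (hx.trans hx'.symm)

include htree in
lemma sep_opposite {u v : V} (huv : T.Adj u v) {x y : V}
    (hsep : ¬ (T.deleteEdges {s(u, v)}).Reachable x y) :
    ((T.deleteEdges {s(u, v)}).Reachable u x ∧ (T.deleteEdges {s(u, v)}).Reachable v y) ∨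
    ((T.deleteEdges {s(u, v)}).Reachable v x ∧ (T.deleteEdges {s(u, v)}).Reachable u y) := by
  rcases side_dichotomy htree.isConnected (u := u) (v := v) x with hxu | hxv
  · rcases side_dichotomy htree.isConnected (u := u) (v := v) y with hyu | hyv
    · exact absurd (hxu.symm.trans hyu) hsep
    · exact Or.inl ⟨hxu, hyv⟩
  · rcases side_dichotomy htree.isConnected (u := u) (v := v) y with hyu | hyv
    · exact Or.inr ⟨hxv, hyu⟩
    · exact absurd (hxv.symm.trans hyv) hsep

end Halin2

end HalinAux

namespace HalinAux

variable {V : Type*}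

lemma ncDeg_eq_degree [Fintype V] (G : SimpleGraph V) [DecidableRel G.Adj] (v : V) :
    ncDeg G v = G.degree v := by
  rw [ncDeg, ← Nat.card_coe_set_eq, Nat.card_eq_fintype_card,
    SimpleGraph.card_neighborSet_eq_degree]

lemma leaf_bound [Fintype V] (T C : SimpleGraph V)
    (htree : T.IsTree) (hcard : Fintype.card V = 16)
    (hsupp : C.support = {v : V | IsLeaf T v})
    (h2reg : ∀ v ∈ C.support, ncDeg C v = 2)
    (hplanar : ∀ u v : V, T.Adj u v →
      (C.induce {x : V | IsLeaf T x ∧ (T.deleteEdges {s(u, v)}).Reachable u x}).Connected)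
    (hfree : C4Free (T ⊔ C)) :
    {x : V | IsLeaf T x}.ncard ≤ 10 := by
  classical
  have hc3 : 3 ≤ Fintype.card V := by omega
  set Lf : Finset V := Finset.univ.filter (fun x => IsLeaf T x) with hLf
  suffices hfin : Lf.card ≤ 10 by
    rw [Set.ncard_eq_toFinset_card', Set.toFinset_setOf]
    convert hfin using 2
  -- choice of a good cycle-neighbour for each leaf
  have hgood : ∀ x : V, ∃ y, IsLeaf T x → (C.Adj x y ∧ par T y ≠ par T x) := by
    intro x
    by_cases hx : IsLeaf T x
    · obtain ⟨y, hy⟩ := exists_good_nbr T C htree hc3 hsupp h2reg hfree hx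
      exact ⟨y, fun _ => hy⟩
    · exact ⟨x, fun h => absurd h hx⟩
  choose g hg using hgood
  set Dset : Finset (V × V) :=
    Finset.univ.filter (fun xy => C.Adj xy.1 xy.2 ∧ par T xy.1 ≠ par T xy.2) with hDset
  have stepA : Lf.card ≤ Dset.card := by
    apply Finset.card_le_card_of_injOn (fun x => (x, g x))
    · intro x hx
      rw [hLf, Finset.mem_coe, Finset.mem_filter] at hx
      obtain ⟨hgy, hgp⟩ := hg x hx.2
      rw [hDset, Finset.mem_coe, Finset.mem_filter]
      exact ⟨Finset.mem_univ _, hgy, hgp.symm⟩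
    · intro x1 _ x2 _ h
      exact (Prod.ext_iff.mp h).1
  set Iset : Finset (V × V) :=
    Finset.univ.filter (fun uv => T.Adj uv.1 uv.2 ∧ ¬ IsLeaf T uv.1 ∧ ¬ IsLeaf T uv.2)
    with hIset
  set KK : Finset ((V × V) × (V × V)) := Finset.univ.filter (fun q =>
    (C.Adj q.1.1 q.1.2 ∧ par T q.1.1 ≠ par T q.1.2) ∧
    (T.Adj q.2.1 q.2.2 ∧ ¬ IsLeaf T q.2.1 ∧ ¬ IsLeaf T q.2.2) ∧
    ¬ (T.deleteEdges {s(q.2.1, q.2.2)}).Reachable q.1.1 q.1.2) with hKK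
  have stepB1 : 4 * Dset.card ≤ KK.card := by
    have hfib : KK.card = ∑ xy ∈ Dset, (KK.filter (fun q => q.1 = xy)).card := by
      apply Finset.card_eq_sum_card_fiberwise
      intro q hq
      rw [hKK, Finset.mem_coe, Finset.mem_filter] at hq
      rw [hDset, Finset.mem_coe, Finset.mem_filter]
      exact ⟨Finset.mem_univ _, hq.2.1⟩
    rw [hfib]
    have : ∀ xy ∈ Dset, 4 ≤ (KK.filter (fun q => q.1 = xy)).card := by
      rintro ⟨x, y⟩ hxy
      rw [hDset, Finset.mem_filter] at hxy
      obtain ⟨-, hadj, hne⟩ := hxy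
      obtain ⟨a, ha_nl, ha_adj, ha_nex, ha_ney, ha_sep⟩ :=
        sep_edge_exists htree hc3 hsupp hfree hadj hne
      obtain ⟨b, hb_nl, hb_adj, hb_nex, hb_ney, hb_sep⟩ :=
        sep_edge_exists htree hc3 hsupp hfree hadj.symm hne.symm
      obtain ⟨hlx, hly⟩ := leaf_of_Cadj T C hsupp hadj
      have hplx : ¬ IsLeaf T (par T x) := par_not_leaf htree.isConnected hc3 hlx
      have hply : ¬ IsLeaf T (par T y) := par_not_leaf htree.isConnected hc3 hly
      set px := par T x
      set py := par T y
      set p1 : (V × V) × (V × V) := ((x, y), (px, a)) with hp1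
      set p2 : (V × V) × (V × V) := ((x, y), (a, px)) with hp2
      set p3 : (V × V) × (V × V) := ((x, y), (py, b)) with hp3
      set p4 : (V × V) × (V × V) := ((x, y), (b, py)) with hp4
      have hm1 : p1 ∈ KK.filter (fun q => q.1 = (x, y)) := by
        rw [Finset.mem_filter, hKK, Finset.mem_filter]
        exact ⟨⟨Finset.mem_univ _, ⟨hadj, hne⟩, ⟨ha_adj, hplx, ha_nl⟩, ha_sep⟩, rfl⟩
      have hm2 : p2 ∈ KK.filter (fun q => q.1 = (x, y)) := by
        rw [Finset.mem_filter, hKK, Finset.mem_filter]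
        refine ⟨⟨Finset.mem_univ _, ⟨hadj, hne⟩, ⟨ha_adj.symm, ha_nl, hplx⟩, ?_⟩, rfl⟩
        rw [show s(a, px) = s(px, a) from Sym2.eq_swap]
        exact ha_sep
      have hm3 : p3 ∈ KK.filter (fun q => q.1 = (x, y)) := by
        rw [Finset.mem_filter, hKK, Finset.mem_filter]
        exact ⟨⟨Finset.mem_univ _, ⟨hadj, hne⟩, ⟨hb_adj, hply, hb_nl⟩,
          fun r => hb_sep r.symm⟩, rfl⟩
      have hm4 : p4 ∈ KK.filter (fun q => q.1 = (x, y)) := by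
        rw [Finset.mem_filter, hKK, Finset.mem_filter]
        refine ⟨⟨Finset.mem_univ _, ⟨hadj, hne⟩, ⟨hb_adj.symm, hb_nl, hply⟩, ?_⟩, rfl⟩
        rw [show s(b, py) = s(py, b) from Sym2.eq_swap]
        exact fun r => hb_sep r.symm
      have hsub : ({p1, p2, p3, p4} : Finset ((V × V) × (V × V)))
          ⊆ KK.filter (fun q => q.1 = (x, y)) := by
        intro q hq
        rcases Finset.mem_insert.mp hq with rfl | hq
        · exact hm1
        rcases Finset.mem_insert.mp hq with rfl | hq
        · exact hm2
        rcases Finset.mem_insert.mp hq with rfl | hq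
        · exact hm3
        rw [Finset.mem_singleton] at hq
        exact hq ▸ hm4
      have d12 : p1 ≠ p2 := fun h => ha_nex (congrArg (fun q => q.2.2) h)
      have d13 : p1 ≠ p3 := fun h => hne (congrArg (fun q => q.2.1) h)
      have d14 : p1 ≠ p4 := fun h => ha_ney (congrArg (fun q => q.2.2) h)
      have d23 : p2 ≠ p3 := fun h => ha_ney (congrArg (fun q => q.2.1) h)
      have d24 : p2 ≠ p4 := fun h => hne (congrArg (fun q => q.2.2) h)
      have d34 : p3 ≠ p4 := fun h => hb_nex (congrArg (fun q => q.2.2) h)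
      have hcard4 : ({p1, p2, p3, p4} : Finset ((V × V) × (V × V))).card = 4 := by
        rw [Finset.card_insert_of_notMem, Finset.card_insert_of_notMem,
          Finset.card_insert_of_notMem, Finset.card_singleton]
        · simp only [Finset.mem_singleton]
          exact d34
        · simp only [Finset.mem_insert, Finset.mem_singleton]
          rintro (h | h)
          exacts [d23 h, d24 h]
        · simp only [Finset.mem_insert, Finset.mem_singleton]
          rintro (h | h | h)
          exacts [d12 h, d13 h, d14 h]
      calc (4 : ℕ) = ({p1, p2, p3, p4} : Finset ((V × V) × (V × V))).card := hcard4.symm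
        _ ≤ _ := Finset.card_le_card hsub
    calc 4 * Dset.card = ∑ _xy ∈ Dset, 4 := by
          rw [Finset.sum_const, smul_eq_mul, mul_comm]
      _ ≤ ∑ xy ∈ Dset, (KK.filter (fun q => q.1 = xy)).card := Finset.sum_le_sum this
  have stepB2 : KK.card ≤ 4 * Iset.card := by
    have hfib : KK.card = ∑ uv ∈ Iset, (KK.filter (fun q => q.2 = uv)).card := by
      apply Finset.card_eq_sum_card_fiberwise
      intro q hq
      rw [hKK, Finset.mem_coe, Finset.mem_filter] at hq
      rw [hIset, Finset.mem_coe, Finset.mem_filter]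
      exact ⟨Finset.mem_univ _, hq.2.2.1⟩
    rw [hfib]
    have hbound : ∀ uv ∈ Iset, (KK.filter (fun q => q.2 = uv)).card ≤ 4 := by
      rintro ⟨u, v⟩ huv_mem
      rw [hIset, Finset.mem_filter] at huv_mem
      obtain ⟨-, huv, hnlu, hnlv⟩ := huv_mem
      set Su : Set V := {x : V | IsLeaf T x ∧ (T.deleteEdges {s(u, v)}).Reachable u x} with hSu
      set Sv : Set V := {x : V | IsLeaf T x ∧ (T.deleteEdges {s(u, v)}).Reachable v x} with hSv
      have hconnu : (C.induce Su).Connected := hplanar u v huv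
      have hconnv : (C.induce Sv).Connected := by
        have h := hplanar v u huv.symm
        rw [show s(v, u) = s(u, v) from Sym2.eq_swap] at h
        exact h
      have hdegu : ∀ x ∈ Su, C.degree x = 2 := by
        intro x hx
        rw [← ncDeg_eq_degree]
        exact h2reg x (by rw [hsupp]; exact hx.1)
      have hdegv : ∀ x ∈ Sv, C.degree x = 2 := by
        intro x hx
        rw [← ncDeg_eq_degree]
        exact h2reg x (by rw [hsupp]; exact hx.1)
      have hcut1 := cut_le_two C Su hdegu hconnu
      have hcut2 := cut_le_two C Sv hdegv hconnv
      set Cut1 : Finset (V × V) :=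
        Finset.univ.filter (fun q : V × V => q.1 ∈ Su ∧ q.2 ∉ Su ∧ C.Adj q.1 q.2) with hCut1
      set Cut2 : Finset (V × V) :=
        Finset.univ.filter (fun q : V × V => q.1 ∈ Sv ∧ q.2 ∉ Sv ∧ C.Adj q.1 q.2) with hCut2
      have hmap : ∀ q ∈ KK.filter (fun q => q.2 = (u, v)), q.1 ∈ Cut1 ∪ Cut2 := by
        rintro ⟨⟨x, y⟩, uv'⟩ hq
        rw [Finset.mem_filter] at hq
        obtain ⟨hqKK, hq2⟩ := hq
        subst hq2
        rw [hKK, Finset.mem_filter] at hqKK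
        obtain ⟨-, ⟨hCadj, -⟩, -, hsep⟩ := hqKK
        obtain ⟨hlx, hly⟩ := leaf_of_Cadj T C hsupp hCadj
        rcases sep_opposite htree huv hsep with ⟨hux, hvy⟩ | ⟨hvx, huy⟩
        · apply Finset.mem_union_left
          rw [hCut1, Finset.mem_filter]
          refine ⟨Finset.mem_univ _, ⟨hlx, hux⟩, ?_, hCadj⟩
          intro hy
          exact sides_exclusive htree huv hy.2 hvy
        · apply Finset.mem_union_right
          rw [hCut2, Finset.mem_filter]
          refine ⟨Finset.mem_univ _, ⟨hlx, hvx⟩, ?_, hCadj⟩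
          intro hy
          exact sides_exclusive htree huv huy hy.2
      have hinj : Set.InjOn (fun q : (V × V) × (V × V) => q.1)
          (KK.filter (fun q => q.2 = (u, v))) := by
        intro q1 h1 q2 h2 h
        rw [Finset.coe_filter, Set.mem_setOf_eq] at h1 h2
        exact Prod.ext h (h1.2.trans h2.2.symm)
      calc (KK.filter (fun q => q.2 = (u, v))).card ≤ (Cut1 ∪ Cut2).card :=
            Finset.card_le_card_of_injOn _ hmap hinj
        _ ≤ Cut1.card + Cut2.card := Finset.card_union_le _ _
        _ ≤ 4 := by omega
    calc ∑ uv ∈ Iset, (KK.filter (fun q => q.2 = uv)).card ≤ ∑ _uv ∈ Iset, 4 :=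
          Finset.sum_le_sum hbound
      _ = 4 * Iset.card := by rw [Finset.sum_const, smul_eq_mul, mul_comm]
  have stepC : Iset.card + 2 * Lf.card ≤ 30 := by
    have hT15 : T.edgeFinset.card = 15 := by
      have h := htree.card_edgeFinset
      rw [hcard] at h
      omega
    set Aset : Finset (V × V) := Finset.univ.filter (fun (x, y) => T.Adj x y) with hAset
    have hA : Aset.card = 30 := by
      have h2 := (SimpleGraph.two_mul_card_edgeFinset (G := T)).symm
      rw [hT15] at h2
      exact h2.symm ▸ rfl
    set J1 : Finset (V × V) := Lf.image (fun x => (x, par T x)) with hJ1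
    set J2 : Finset (V × V) := Lf.image (fun x => (par T x, x)) with hJ2
    have hJ1card : J1.card = Lf.card := by
      apply Finset.card_image_of_injOn
      intro x1 _ x2 _ h
      exact (Prod.ext_iff.mp h).1
    have hJ2card : J2.card = Lf.card := by
      apply Finset.card_image_of_injOn
      intro x1 _ x2 _ h
      exact (Prod.ext_iff.mp h).2
    have hLf_mem : ∀ x, x ∈ Lf ↔ IsLeaf T x := by
      intro x
      rw [hLf, Finset.mem_filter]
      simp
    have hsubI : Iset ⊆ Aset := by
      rintro ⟨x, y⟩ hq
      rw [hIset, Finset.mem_filter] at hq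
      rw [hAset, Finset.mem_filter]
      exact ⟨Finset.mem_univ _, hq.2.1⟩
    have hsubJ1 : J1 ⊆ Aset := by
      rintro q hq
      rw [hJ1, Finset.mem_image] at hq
      obtain ⟨x, hx, rfl⟩ := hq
      rw [hAset, Finset.mem_filter]
      exact ⟨Finset.mem_univ _, adj_par ((hLf_mem x).mp hx)⟩
    have hsubJ2 : J2 ⊆ Aset := by
      rintro q hq
      rw [hJ2, Finset.mem_image] at hq
      obtain ⟨x, hx, rfl⟩ := hq
      rw [hAset, Finset.mem_filter]
      exact ⟨Finset.mem_univ _, (adj_par ((hLf_mem x).mp hx)).symm⟩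
    have hd12 : Disjoint J1 J2 := by
      rw [Finset.disjoint_left]
      rintro q hq1 hq2
      rw [hJ1, Finset.mem_image] at hq1
      rw [hJ2, Finset.mem_image] at hq2
      obtain ⟨x, hx, rfl⟩ := hq1
      obtain ⟨y, hy, hxy⟩ := hq2
      have h1 : par T y = x := (Prod.ext_iff.mp hxy).1
      exact par_not_leaf htree.isConnected hc3 ((hLf_mem y).mp hy)
        (h1 ▸ ((hLf_mem x).mp hx))
    have hd1I : Disjoint J1 Iset := by
      rw [Finset.disjoint_left]
      rintro q hq1 hq2
      rw [hJ1, Finset.mem_image] at hq1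
      obtain ⟨x, hx, rfl⟩ := hq1
      rw [hIset, Finset.mem_filter] at hq2
      exact hq2.2.2.1 ((hLf_mem x).mp hx)
    have hd2I : Disjoint J2 Iset := by
      rw [Finset.disjoint_left]
      rintro q hq1 hq2
      rw [hJ2, Finset.mem_image] at hq1
      obtain ⟨x, hx, rfl⟩ := hq1
      rw [hIset, Finset.mem_filter] at hq2
      exact hq2.2.2.2 ((hLf_mem x).mp hx)
    have hunion : (J1 ∪ J2 ∪ Iset).card = J1.card + J2.card + Iset.card := by
      rw [Finset.card_union_of_disjoint, Finset.card_union_of_disjoint hd12]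
      rw [Finset.disjoint_union_left]
      exact ⟨hd1I, hd2I⟩
    have hsub : J1 ∪ J2 ∪ Iset ⊆ Aset := by
      intro q hq
      rcases Finset.mem_union.mp hq with hq | hq
      · rcases Finset.mem_union.mp hq with hq | hq
        · exact hsubJ1 hq
        · exact hsubJ2 hq
      · exact hsubI hq
    have := Finset.card_le_card hsub
    rw [hunion, hA, hJ1card, hJ2card] at this
    omega
  omega

end HalinAux


open HalinAux in
/-- Every `16`-vertex `C₄`-free Halin graph has at most `25` edges. -/
theorem halin_sixteen {V : Type*} [Fintype V] (hcard : Fintype.card V = 16)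
    (H : HalinGraph V) (hfree : C4Free H.graph) :
    eCount H.graph ≤ 25 := by
  classical
  obtain ⟨T, C, htree, hfour, hdeg3, hsupp, h2reg, hconn, hplanar⟩ := H
  have hc3 : 3 ≤ Fintype.card V := by omega
  have hfree' : C4Free (T ⊔ C) := hfree
  have hleaf := leaf_bound T C htree hcard hsupp h2reg hplanar hfree'
  have hT15 : T.edgeFinset.card = 15 := by
    have h := htree.card_edgeFinset
    rw [hcard] at h
    omega
  set Lf := Finset.univ.filter (fun x => IsLeaf T x) with hLfdef
  have hLl : Lf.card ≤ 10 := by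
    rw [Set.ncard_eq_toFinset_card', Set.toFinset_setOf] at hleaf
    convert hleaf using 2
  have hCdeg : ∀ v : V, C.degree v = if IsLeaf T v then 2 else 0 := by
    intro v
    by_cases hv : IsLeaf T v
    · rw [if_pos hv, ← ncDeg_eq_degree]
      exact h2reg v (by rw [hsupp]; exact hv)
    · rw [if_neg hv]
      have hnot : v ∉ C.support := by rw [hsupp]; exact hv
      have hempty : C.neighborFinset v = ∅ := by
        ext w
        simp only [SimpleGraph.mem_neighborFinset, Finset.notMem_empty, iff_false]
        exact fun h => hnot ⟨w, h⟩
      rw [← SimpleGraph.card_neighborFinset_eq_degree, hempty, Finset.card_empty]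
  have hCsum : ∑ v, C.degree v = 2 * Lf.card := by
    calc ∑ v, C.degree v = ∑ v, (if IsLeaf T v then 2 else 0) :=
          Finset.sum_congr rfl (fun v _ => hCdeg v)
      _ = ∑ _v ∈ Lf, 2 := (Finset.sum_filter _ _).symm
      _ = 2 * Lf.card := by rw [Finset.sum_const, smul_eq_mul, mul_comm]
  have hCcard : C.edgeFinset.card = Lf.card := by
    have h := SimpleGraph.sum_degrees_eq_twice_card_edges C
    rw [hCsum] at h
    omega
  have hdisj : Disjoint T.edgeFinset C.edgeFinset := by
    rw [Finset.disjoint_left]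
    intro e heT heC
    rw [SimpleGraph.mem_edgeFinset] at heT heC
    induction e using Sym2.ind with
    | _ a b =>
      rw [SimpleGraph.mem_edgeSet] at heT heC
      obtain ⟨hla, hlb⟩ := leaf_of_Cadj T C hsupp heC
      exact no_leaf_leaf htree.isConnected hc3 hla hlb heT
  show eCount (T ⊔ C) ≤ 25
  have hcount : eCount (T ⊔ C) = (T ⊔ C).edgeFinset.card := by
    rw [eCount, ← Nat.card_coe_set_eq, Nat.card_eq_fintype_card,
      ← SimpleGraph.edgeFinset_card]
  have hsup : (T ⊔ C).edgeFinset = T.edgeFinset ∪ C.edgeFinset := SimpleGraph.edgeFinset_sup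
  rw [hcount, hsup, Finset.card_union_of_disjoint hdisj, hT15, hCcard]
  omega
end
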